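/- For k ≥ n² − n, the optimal revisit time R*(k) takes only two values: R*(k) = R*(n) = TSP* if n divides k, and R*(k) = R*(n+1) otherwise. -/
import Mathlib


/-- A closed walk with `k` visits on `n` targets, modeled as a `k`-periodic
sequence of targets in which consecutive visits are distinct and every
target is visited at least once in each period. -/
structure CWalk (n k : ℕ) where
  seq : ℕ → Fin n
  periodic : ∀ i, seq (i + k) = seq i
  step : ∀ i, seq i ≠ seq (i + 1)
  covers : ∀ d : Fin n, ∃ i < k, seq i = d

namespace CWalk

/-- Travel time from the `i`-th to the `j`-th visit. -/
noncomputable def tt {n k : ℕ} (c : Fin n → Fin n → ℝ) (W : CWalk n k) (i j : ℕ) : ℝ :=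
  ∑ t ∈ Finset.Ico i j, c (W.seq t) (W.seq (t + 1))

/-- Duration of one period of the walk. -/
noncomputable def duration {n k : ℕ} (c : Fin n → Fin n → ℝ) (W : CWalk n k) : ℝ :=
  W.tt c 0 k

/-- Revisit time of target `d`: the maximum time between consecutive visits to `d`. -/
noncomputable def RT {n k : ℕ} (c : Fin n → Fin n → ℝ) (W : CWalk n k) (d : Fin n) : ℝ :=
  sSup {T : ℝ | ∃ i j : ℕ, i < j ∧ W.seq i = d ∧ W.seq j = d ∧
    (∀ t, i < t → t < j → W.seq t ≠ d) ∧ T = W.tt c i j}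

/-- Revisit time of the walk: maximum revisit time over all targets. -/
noncomputable def R {n k : ℕ} (c : Fin n → Fin n → ℝ) (W : CWalk n k) : ℝ :=
  sSup {T : ℝ | ∃ d : Fin n, T = W.RT c d}

end CWalk

/-- Optimal revisit time over all closed walks with `k` visits. -/
noncomputable def Rstar (n : ℕ) (c : Fin n → Fin n → ℝ) (k : ℕ) : ℝ :=
  sInf {T : ℝ | ∃ W : CWalk n k, T = W.R c}

/-- Optimal TSP tour length: minimal duration of a closed walk with `n` visits
(each target is then visited exactly once). -/
noncomputable def TSPstar (n : ℕ) (c : Fin n → Fin n → ℝ) : ℝ :=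
  sInf {T : ℝ | ∃ W : CWalk n n, T = W.duration c}


section Aux

open Finset

variable {n k m : ℕ}

/-! ### Basic sequence lemmas -/

lemma seq_add_mul (W : CWalk n k) (i a : ℕ) : W.seq (i + a * k) = W.seq i := by
  induction a with
  | zero => simp
  | succ a ih =>
      have h : i + (a + 1) * k = (i + a * k) + k := by ring
      rw [h, W.periodic, ih]

lemma seq_mod (W : CWalk n k) (i : ℕ) : W.seq (i % k) = W.seq i := by
  conv_rhs => rw [← Nat.mod_add_div i k, mul_comm]
  exact (seq_add_mul W (i % k) (i / k)).symm

lemma seq_congr (W : CWalk n k) {a b : ℕ} (h : a % k = b % k) : W.seq a = W.seq b := by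
  rw [← seq_mod W a, h, seq_mod]

/-! ### Travel time lemmas -/

variable {c : Fin n → Fin n → ℝ}

lemma edge_nonneg (hc : ∀ u v : Fin n, u ≠ v → 0 < c u v) (W : CWalk n k) (t : ℕ) :
    0 ≤ c (W.seq t) (W.seq (t + 1)) :=
  le_of_lt (hc _ _ (W.step t))

lemma tt_nonneg (hc : ∀ u v : Fin n, u ≠ v → 0 < c u v) (W : CWalk n k) (i j : ℕ) :
    0 ≤ W.tt c i j :=
  Finset.sum_nonneg fun t _ => edge_nonneg hc W t

lemma tt_add (W : CWalk n k) {i j l : ℕ} (hij : i ≤ j) (hjl : j ≤ l) :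
    W.tt c i j + W.tt c j l = W.tt c i l :=
  Finset.sum_Ico_consecutive _ hij hjl

lemma tt_self (W : CWalk n k) (i : ℕ) : W.tt c i i = 0 := by
  simp [CWalk.tt]

lemma tt_succ (W : CWalk n k) (i : ℕ) : W.tt c i (i + 1) = c (W.seq i) (W.seq (i + 1)) := by
  rw [CWalk.tt, Finset.Ico_add_one_right_eq_Icc, Finset.Icc_self, Finset.sum_singleton]

lemma tt_mono (hc : ∀ u v : Fin n, u ≠ v → 0 < c u v) (W : CWalk n k) {i j l : ℕ}
    (hij : i ≤ j) (hjl : j ≤ l) : W.tt c i j ≤ W.tt c i l := by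
  have := tt_add W (c := c) hij hjl
  have h2 := tt_nonneg hc W j l
  linarith

lemma tt_shift (W : CWalk n k) (i j : ℕ) : W.tt c (i + k) (j + k) = W.tt c i j := by
  unfold CWalk.tt
  rw [Finset.sum_Ico_eq_sum_range, Finset.sum_Ico_eq_sum_range]
  have h : j + k - (i + k) = j - i := by omega
  rw [h]
  refine Finset.sum_congr rfl fun t _ => ?_
  have h1 : i + k + t = (i + t) + k := by ring
  have h2 : i + t + k + 1 = (i + t + 1) + k := by ring
  rw [h1, h2, W.periodic, W.periodic]

lemma tt_shift_mul (W : CWalk n k) (i j a : ℕ) : W.tt c (i + a * k) (j + a * k) = W.tt c i j := by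
  induction a with
  | zero => simp
  | succ a ih =>
      have h1 : i + (a + 1) * k = (i + a * k) + k := by ring
      have h2 : j + (a + 1) * k = (j + a * k) + k := by ring
      rw [h1, h2, tt_shift, ih]

lemma tt_window (W : CWalk n k) (i : ℕ) : W.tt c i (i + k) = W.duration c := by
  induction i with
  | zero => simp [CWalk.duration]
  | succ i ih =>
      have e1 : W.tt c i (i + 1) + W.tt c (i + 1) (i + k + 1) = W.tt c i (i + k + 1) :=
        tt_add W (by omega) (by omega)
      have e2 : W.tt c i (i + k) + W.tt c (i + k) (i + k + 1) = W.tt c i (i + k + 1) :=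
        tt_add W (by omega) (by omega)
      have e3 : W.tt c i (i + 1) = W.tt c (i + k) (i + k + 1) := by
        rw [tt_succ, tt_succ, W.periodic]
        have h : i + k + 1 = (i + 1) + k := by ring
        rw [h, W.periodic]
      have h : i + 1 + k = i + k + 1 := by ring
      rw [h]
      linarith

/-! ### Representatives and occurrences -/

lemma exists_rep {M : ℕ} (hM : 0 < M) (a lo : ℕ) :
    ∃ t, lo ≤ t ∧ t < lo + M ∧ t % M = a % M := by
  have hmod : M * (lo / M) + lo % M = lo := Nat.div_add_mod lo M
  have hlt : lo % M < M := Nat.mod_lt _ hM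
  have ha : a % M < M := Nat.mod_lt _ hM
  by_cases h : lo % M ≤ a % M
  · refine ⟨a % M + M * (lo / M), by omega, by omega, ?_⟩
    rw [Nat.add_mul_mod_self_left, Nat.mod_mod_of_dvd _ dvd_rfl]
  · have hexp : M * (lo / M + 1) = M * (lo / M) + M := by ring
    refine ⟨a % M + M * (lo / M + 1), by omega, by omega, ?_⟩
    rw [Nat.add_mul_mod_self_left, Nat.mod_mod_of_dvd _ dvd_rfl]

lemma exists_occ (W : CWalk n k) (d : Fin n) : ∃ o, o < k ∧ W.seq o = d := by
  obtain ⟨i, hi, h⟩ := W.covers d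
  exact ⟨i, hi, h⟩

lemma k_pos (W : CWalk n k) (hn : 0 < n) : 0 < k := by
  obtain ⟨o, ho, -⟩ := exists_occ W ⟨0, hn⟩
  omega

lemma exists_occ_window (W : CWalk n k) (hk : 0 < k) (d : Fin n) (lo : ℕ) :
    ∃ t, lo ≤ t ∧ t < lo + k ∧ W.seq t = d := by
  obtain ⟨o, hok, ho⟩ := exists_occ W d
  obtain ⟨t, h1, h2, h3⟩ := exists_rep hk o lo
  refine ⟨t, h1, h2, ?_⟩
  rw [seq_congr W h3]
  exact ho

/-- The next visit to `d` strictly after time `i`. -/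
noncomputable def nxt (W : CWalk n k) (d : Fin n) (i : ℕ) : ℕ :=
  sInf {j | i < j ∧ W.seq j = d}

lemma nxt_spec (W : CWalk n k) (hk : 0 < k) (d : Fin n) (i : ℕ) :
    i < nxt W d i ∧ W.seq (nxt W d i) = d ∧ nxt W d i ≤ i + k := by
  obtain ⟨t, h1, h2, h3⟩ := exists_occ_window W hk d (i + 1)
  have hne : {j | i < j ∧ W.seq j = d}.Nonempty := ⟨t, by omega, h3⟩
  have hmem := Nat.sInf_mem hne
  have hle : nxt W d i ≤ t := Nat.sInf_le ⟨by omega, h3⟩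
  exact ⟨hmem.1, hmem.2, by omega⟩

lemma nxt_min (W : CWalk n k) (d : Fin n) {i t : ℕ} (h1 : i < t) (h2 : t < nxt W d i) :
    W.seq t ≠ d := by
  intro h
  exact absurd ⟨h1, h⟩ (Nat.notMem_of_lt_sInf h2)

/-! ### RT and R lemmas -/

def RTset (c : Fin n → Fin n → ℝ) (W : CWalk n k) (d : Fin n) : Set ℝ :=
  {T : ℝ | ∃ i j : ℕ, i < j ∧ W.seq i = d ∧ W.seq j = d ∧
    (∀ t, i < t → t < j → W.seq t ≠ d) ∧ T = W.tt c i j}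

lemma RT_eq_sSup (W : CWalk n k) (d : Fin n) : W.RT c d = sSup (RTset c W d) := rfl

lemma mem_RTset_nxt (W : CWalk n k) (hk : 0 < k) {d : Fin n} {i : ℕ} (hi : W.seq i = d) :
    W.tt c i (nxt W d i) ∈ RTset c W d := by
  obtain ⟨h1, h2, h3⟩ := nxt_spec W hk d i
  exact ⟨i, nxt W d i, h1, hi, h2, fun t ht1 ht2 => nxt_min W d ht1 ht2, rfl⟩

lemma RTset_nonempty (W : CWalk n k) (hk : 0 < k) (d : Fin n) :
    (RTset c W d).Nonempty := by
  obtain ⟨o, -, ho⟩ := exists_occ W d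
  exact ⟨_, mem_RTset_nxt W hk ho⟩

lemma RTset_le_duration (hc : ∀ u v : Fin n, u ≠ v → 0 < c u v) (W : CWalk n k) (hk : 0 < k)
    (d : Fin n) : ∀ T ∈ RTset c W d, T ≤ W.duration c := by
  rintro T ⟨i, j, hij, hi, hj, hbet, rfl⟩
  have hjk : j ≤ i + k := by
    by_contra hcon
    obtain ⟨t, h1, h2, h3⟩ := exists_occ_window W hk d (i + 1)
    exact hbet t (by omega) (by omega) h3
  calc W.tt c i j ≤ W.tt c i (i + k) := tt_mono hc W (by omega) hjk
    _ = W.duration c := tt_window W i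

lemma bddAbove_RTset (hc : ∀ u v : Fin n, u ≠ v → 0 < c u v) (W : CWalk n k) (hk : 0 < k)
    (d : Fin n) : BddAbove (RTset c W d) :=
  ⟨W.duration c, RTset_le_duration hc W hk d⟩

lemma le_RT (hc : ∀ u v : Fin n, u ≠ v → 0 < c u v) (W : CWalk n k) (hk : 0 < k)
    {d : Fin n} {T : ℝ} (hT : T ∈ RTset c W d) : T ≤ W.RT c d :=
  le_csSup (bddAbove_RTset hc W hk d) hT

lemma RT_le (W : CWalk n k) (hk : 0 < k) {d : Fin n} {B : ℝ}
    (hB : ∀ T ∈ RTset c W d, T ≤ B) : W.RT c d ≤ B :=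
  csSup_le (RTset_nonempty W hk d) hB

lemma RT_le_duration (hc : ∀ u v : Fin n, u ≠ v → 0 < c u v) (W : CWalk n k) (hk : 0 < k)
    (d : Fin n) : W.RT c d ≤ W.duration c :=
  RT_le W hk (RTset_le_duration hc W hk d)

lemma RT_nonneg (hc : ∀ u v : Fin n, u ≠ v → 0 < c u v) (W : CWalk n k) (hk : 0 < k)
    (d : Fin n) : 0 ≤ W.RT c d := by
  obtain ⟨o, -, ho⟩ := exists_occ W d
  exact le_trans (tt_nonneg hc W o (nxt W d o)) (le_RT hc W hk (mem_RTset_nxt W hk ho))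

def Rset (c : Fin n → Fin n → ℝ) (W : CWalk n k) : Set ℝ :=
  {T : ℝ | ∃ d : Fin n, T = W.RT c d}

lemma R_eq_sSup (W : CWalk n k) : W.R c = sSup (Rset c W) := rfl

lemma RT_le_R (hc : ∀ u v : Fin n, u ≠ v → 0 < c u v) (W : CWalk n k) (hn : 0 < n)
    (d : Fin n) : W.RT c d ≤ W.R c := by
  have hk := k_pos W hn
  exact le_csSup ⟨W.duration c, by rintro T ⟨e, rfl⟩; exact RT_le_duration hc W hk e⟩ ⟨d, rfl⟩

lemma R_le (W : CWalk n k) (hn : 0 < n) {B : ℝ} (hB : ∀ d : Fin n, W.RT c d ≤ B) :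
    W.R c ≤ B :=
  csSup_le ⟨W.RT c ⟨0, hn⟩, ⟨0, hn⟩, rfl⟩ (by rintro T ⟨d, rfl⟩; exact hB d)

lemma R_le_duration (hc : ∀ u v : Fin n, u ≠ v → 0 < c u v) (W : CWalk n k) (hn : 0 < n) :
    W.R c ≤ W.duration c :=
  R_le W hn fun d => RT_le_duration hc W (k_pos W hn) d

lemma R_nonneg (hc : ∀ u v : Fin n, u ≠ v → 0 < c u v) (W : CWalk n k) (hn : 0 < n) :
    0 ≤ W.R c :=
  le_trans (RT_nonneg hc W (k_pos W hn) ⟨0, hn⟩) (RT_le_R hc W hn ⟨0, hn⟩)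

/-! ### Rstar and TSPstar lemmas -/

lemma bddBelow_Rstar_set (hc : ∀ u v : Fin n, u ≠ v → 0 < c u v) (hn : 0 < n) (k : ℕ) :
    BddBelow {T : ℝ | ∃ W : CWalk n k, T = W.R c} :=
  ⟨0, by rintro T ⟨W, rfl⟩; exact R_nonneg hc W hn⟩

lemma Rstar_le_R (hc : ∀ u v : Fin n, u ≠ v → 0 < c u v) (hn : 0 < n) (W : CWalk n k) :
    Rstar n c k ≤ W.R c :=
  csInf_le (bddBelow_Rstar_set hc hn k) ⟨W, rfl⟩

lemma le_Rstar (hn : 0 < n) (W₀ : CWalk n k) {B : ℝ} (hB : ∀ W : CWalk n k, B ≤ W.R c) :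
    B ≤ Rstar n c k :=
  le_csInf ⟨W₀.R c, W₀, rfl⟩ (by rintro T ⟨W, rfl⟩; exact hB W)

lemma bddBelow_TSPstar_set (hc : ∀ u v : Fin n, u ≠ v → 0 < c u v) :
    BddBelow {T : ℝ | ∃ W : CWalk n n, T = W.duration c} :=
  ⟨0, by rintro T ⟨W, rfl⟩; exact tt_nonneg hc W 0 n⟩

lemma TSPstar_le_duration (hc : ∀ u v : Fin n, u ≠ v → 0 < c u v) (W : CWalk n n) :
    TSPstar n c ≤ W.duration c :=
  csInf_le (bddBelow_TSPstar_set hc) ⟨W, rfl⟩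

lemma le_TSPstar (W₀ : CWalk n n) {B : ℝ} (hB : ∀ W : CWalk n n, B ≤ W.duration c) :
    B ≤ TSPstar n c :=
  le_csInf ⟨W₀.duration c, W₀, rfl⟩ (by rintro T ⟨W, rfl⟩; exact hB W)

/-! ### Counting lemmas -/

lemma mod_inj_window {M : ℕ} (hM : 0 < M) {a t t' : ℕ} (h1 : a ≤ t) (h2 : t < a + M)
    (h3 : a ≤ t') (h4 : t' < a + M) (h5 : t % M = t' % M) : t = t' := by
  have e1 := Nat.div_add_mod t M
  have e2 := Nat.div_add_mod t' M
  rcases Nat.lt_trichotomy (t / M) (t' / M) with h | h | h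
  · have hmul : M * (t / M + 1) ≤ M * (t' / M) := Nat.mul_le_mul_left M h
    have hexp : M * (t / M + 1) = M * (t / M) + M := by ring
    omega
  · rw [h] at e1
    omega
  · have hmul : M * (t' / M + 1) ≤ M * (t / M) := Nat.mul_le_mul_left M h
    have hexp : M * (t' / M + 1) = M * (t' / M) + M := by ring
    omega

lemma nxt_shift (W : CWalk n k) (hk : 0 < k) (d : Fin n) (i : ℕ) :
    nxt W d (i + k) = nxt W d i + k := by
  obtain ⟨h1, h2, h3⟩ := nxt_spec W hk d i
  have hle : nxt W d (i + k) ≤ nxt W d i + k := by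
    apply Nat.sInf_le
    exact ⟨by omega, by rw [W.periodic]; exact h2⟩
  obtain ⟨h1', h2', h3'⟩ := nxt_spec W hk d (i + k)
  have hge : nxt W d i ≤ nxt W d (i + k) - k := by
    apply Nat.sInf_le
    constructor
    · omega
    · have heq : (nxt W d (i + k) - k) + k = nxt W d (i + k) := by omega
      rw [← heq] at h2'
      rw [← W.periodic]
      exact h2'
  omega

lemma count_window (W : CWalk n k) (hk : 0 < k) (d : Fin n) (a : ℕ) :
    ((Finset.Ico a (a + k)).filter (fun t => W.seq t = d)).card
      = ((Finset.range k).filter (fun t => W.seq t = d)).card := by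
  apply Finset.card_bij (fun t _ => t % k)
  · intro t ht
    simp only [Finset.mem_filter, Finset.mem_Ico] at ht
    simp only [Finset.mem_filter, Finset.mem_range]
    exact ⟨Nat.mod_lt _ hk, by rw [seq_mod]; exact ht.2⟩
  · intro t ht t' ht' he
    simp only [Finset.mem_filter, Finset.mem_Ico] at ht ht'
    exact mod_inj_window hk ht.1.1 ht.1.2 ht'.1.1 ht'.1.2 he
  · intro o ho
    simp only [Finset.mem_filter, Finset.mem_range] at ho
    obtain ⟨t, h1, h2, h3⟩ := exists_rep hk o a
    refine ⟨t, ?_, ?_⟩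
    · simp only [Finset.mem_filter, Finset.mem_Ico]
      refine ⟨⟨h1, h2⟩, ?_⟩
      rw [seq_congr W h3]
      exact ho.2
    · rw [h3, Nat.mod_eq_of_lt ho.1]

lemma sum_counts (W : CWalk n k) :
    ∑ d : Fin n, ((Finset.range k).filter (fun t => W.seq t = d)).card = k := by
  have h := Finset.card_eq_sum_card_fiberwise
    (f := W.seq) (s := Finset.range k) (t := Finset.univ) (fun x _ => Finset.mem_univ _)
  simpa using h.symm

lemma count_pos (W : CWalk n k) (d : Fin n) :
    0 < ((Finset.range k).filter (fun t => W.seq t = d)).card := by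
  obtain ⟨o, h1, h2⟩ := exists_occ W d
  exact Finset.card_pos.mpr ⟨o, Finset.mem_filter.mpr ⟨Finset.mem_range.mpr h1, h2⟩⟩

lemma dvd_of_gaps_le (W : CWalk n k) (hn : 0 < n)
    (hgap : ∀ i, k ≤ i → nxt W (W.seq i) i ≤ i + n) : n ∣ k := by
  classical
  have hk := k_pos W hn
  have key : ∀ d : Fin n, k ≤ n * ((Finset.range k).filter (fun t => W.seq t = d)).card := by
    intro d
    obtain ⟨t₀, ht₀1, ht₀2, ht₀3⟩ := exists_occ_window W hk d k
    set s : Finset ℕ := Finset.Ico t₀ (t₀ + k) with hs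
    set f : ℕ → ℕ := fun t => Nat.findGreatest (fun p => W.seq p = d) t with hf
    have hprv : ∀ t ∈ s, t₀ ≤ f t ∧ f t ≤ t ∧ W.seq (f t) = d ∧ t < nxt W d (f t) := by
      intro t ht
      simp only [hs, Finset.mem_Ico] at ht
      have hle : t₀ ≤ f t := Nat.le_findGreatest (P := fun p => W.seq p = d) ht.1 ht₀3
      have hspec : W.seq (f t) = d := by
        have := Nat.findGreatest_spec (P := fun p => W.seq p = d) ht.1 ht₀3
        simpa [hf] using this
      have hft : f t ≤ t := Nat.findGreatest_le t
      refine ⟨hle, hft, hspec, ?_⟩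
      by_contra hcon
      push_neg at hcon
      have h1 := (nxt_spec W hk d (f t)).1
      have h2 := (nxt_spec W hk d (f t)).2.1
      exact Nat.findGreatest_is_greatest h1 hcon h2
    have hcard : s.card ≤ n * (s.image f).card := by
      apply Finset.card_le_mul_card_image
      intro a ha
      obtain ⟨t1, ht1, hft1⟩ := Finset.mem_image.mp ha
      obtain ⟨hta, htb, htc, -⟩ := hprv t1 ht1
      rw [hft1] at hta htb htc
      have hak : k ≤ a := by omega
      have hnxt : nxt W d a ≤ a + n := by
        have := hgap a hak
        rwa [htc] at this
      have hsub : (s.filter fun x => f x = a) ⊆ Finset.Ico a (a + n) := by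
        intro t ht
        simp only [Finset.mem_filter] at ht
        obtain ⟨h1', h2', h3', h4'⟩ := hprv t ht.1
        rw [ht.2] at h2' h4'
        simp only [Finset.mem_Ico]
        exact ⟨h2', by omega⟩
      calc (s.filter fun x => f x = a).card ≤ (Finset.Ico a (a + n)).card :=
            Finset.card_le_card hsub
        _ = n := by rw [Nat.card_Ico]; omega
    have himg : (s.image f) ⊆ (Finset.Ico t₀ (t₀ + k)).filter (fun t => W.seq t = d) := by
      intro a ha
      obtain ⟨t1, ht1, hft1⟩ := Finset.mem_image.mp ha
      obtain ⟨hta, htb, htc, -⟩ := hprv t1 ht1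
      rw [hft1] at hta htb htc
      have ht1' : t1 < t₀ + k := by
        have := Finset.mem_Ico.mp (by simpa [hs] using ht1)
        exact this.2
      simp only [Finset.mem_filter, Finset.mem_Ico]
      exact ⟨⟨hta, by omega⟩, htc⟩
    have himgcard := Finset.card_le_card himg
    rw [count_window W hk d t₀] at himgcard
    have hscard : s.card = k := by rw [hs, Nat.card_Ico]; omega
    calc k = s.card := hscard.symm
      _ ≤ n * (s.image f).card := hcard
      _ ≤ n * ((Finset.range k).filter (fun t => W.seq t = d)).card :=
          Nat.mul_le_mul_left n himgcard
  by_contra hnd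
  have hstrict : ∀ d : Fin n,
      k + 1 ≤ n * ((Finset.range k).filter (fun t => W.seq t = d)).card := by
    intro d
    rcases Nat.eq_or_lt_of_le (key d) with he | hlt
    · exact absurd ⟨_, he⟩ hnd
    · omega
  have h2 : ∑ _d : Fin n, (k + 1) ≤
      ∑ d : Fin n, n * ((Finset.range k).filter (fun t => W.seq t = d)).card :=
    Finset.sum_le_sum fun d _ => hstrict d
  rw [← Finset.mul_sum, sum_counts W] at h2
  have h3 : ∑ _d : Fin n, (k + 1) = n * (k + 1) := by
    simp [Finset.sum_const, mul_comm]
  have h4 : n * (k + 1) = n * k + n := by ring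
  omega

lemma exists_maxgap (W : CWalk n k) (hk : 0 < k) :
    ∃ i₀, k ≤ i₀ ∧
      (∀ i, k ≤ i → nxt W (W.seq i) i - i ≤ nxt W (W.seq i₀) i₀ - i₀) ∧
      (∀ e : Fin n, ∃ t, i₀ ≤ t ∧ t ≤ nxt W (W.seq i₀) i₀ ∧ W.seq t = e) := by
  obtain ⟨i₀, hmem, hmax⟩ := Finset.exists_max_image (Finset.Ico k (2 * k))
    (fun i => nxt W (W.seq i) i - i) ⟨k, by simp [Finset.mem_Ico]; omega⟩
  simp only [Finset.mem_Ico] at hmem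
  have hshift : ∀ i a, nxt W (W.seq (i + a * k)) (i + a * k) - (i + a * k)
      = nxt W (W.seq i) i - i := by
    intro i a
    rw [seq_add_mul]
    induction a with
    | zero => simp
    | succ a ih =>
        have h : i + (a + 1) * k = (i + a * k) + k := by ring
        rw [h, nxt_shift W hk]
        omega
  have hmax' : ∀ i, k ≤ i → nxt W (W.seq i) i - i ≤ nxt W (W.seq i₀) i₀ - i₀ := by
    intro i hi
    obtain ⟨t, h1, h2, h3⟩ := exists_rep hk i k
    have hti : t ≤ i := by
      rcases Nat.lt_or_ge i t with hlt | hge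
      · exfalso
        have hdvd : k ∣ t - i := (Nat.modEq_iff_dvd' (le_of_lt hlt)).mp h3.symm
        obtain ⟨u, hu⟩ := hdvd
        have : k ≤ k * u ∨ k * u = 0 := by
          rcases Nat.eq_zero_or_pos u with h | h
          · right; simp [h]
          · exact Or.inl (Nat.le_mul_of_pos_right k h)
        omega
      · exact hge
    obtain ⟨u, hu⟩ : k ∣ i - t := (Nat.modEq_iff_dvd' hti).mp h3
    have hieq : i = t + u * k := by
      have : u * k = k * u := mul_comm u k
      omega
    rw [hieq, hshift]
    exact hmax t (Finset.mem_Ico.mpr ⟨h1, by omega⟩)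
  refine ⟨i₀, hmem.1, hmax', ?_⟩
  intro e
  by_contra hcon
  push_neg at hcon
  obtain ⟨hij, hjd, hjk⟩ := nxt_spec W hk (W.seq i₀) i₀
  have hed : e ≠ W.seq i₀ := by
    intro h
    exact hcon i₀ le_rfl (le_of_lt hij) (h ▸ rfl)
  obtain ⟨o, hok, hoe⟩ := exists_occ W e
  set p := Nat.findGreatest (fun s => W.seq s = e) i₀ with hp
  have hpo : W.seq p = e := by
    have := Nat.findGreatest_spec (P := fun s => W.seq s = e) (m := o) (n := i₀) (by omega) hoe
    simpa [hp] using this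
  have hpi : p ≤ i₀ := Nat.findGreatest_le i₀
  have hpi' : p < i₀ := by
    rcases Nat.eq_or_lt_of_le hpi with h | h
    · exfalso; apply hed; rw [← hpo, h]
    · exact h
  have hje : nxt W (W.seq i₀) i₀ < nxt W e p := by
    by_contra hcon2
    push_neg at hcon2
    have h1 := (nxt_spec W hk e p).1
    have h2 := (nxt_spec W hk e p).2.1
    rcases Nat.lt_or_ge (nxt W e p) i₀ with hlt | hge
    · exact Nat.findGreatest_is_greatest h1 (le_of_lt hlt) h2
    · exact hcon _ hge hcon2 h2
  have hpk := hmax' (p + k) (by omega)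
  rw [show p + k = p + 1 * k by ring, hshift, hpo] at hpk
  omega

lemma duration_le_RT_of_count_one (hc : ∀ u v : Fin n, u ≠ v → 0 < c u v)
    (W : CWalk n k) (hk : 0 < k) {d : Fin n}
    (h1 : ((Finset.range k).filter (fun t => W.seq t = d)).card = 1) :
    W.duration c ≤ W.RT c d := by
  obtain ⟨o, ho⟩ := Finset.card_eq_one.mp h1
  have hom : o ∈ (Finset.range k).filter (fun t => W.seq t = d) := by
    rw [ho]; exact Finset.mem_singleton_self o
  simp only [Finset.mem_filter, Finset.mem_range] at hom
  have huniq : ∀ t, W.seq t = d → t % k = o := by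
    intro t ht
    have hmem : t % k ∈ (Finset.range k).filter (fun t => W.seq t = d) := by
      simp only [Finset.mem_filter, Finset.mem_range]
      exact ⟨Nat.mod_lt _ hk, by rw [seq_mod]; exact ht⟩
    rw [ho] at hmem
    exact Finset.mem_singleton.mp hmem
  have hmem : W.tt c o (o + k) ∈ RTset c W d := by
    refine ⟨o, o + k, by omega, hom.2, ?_, ?_, rfl⟩
    · rw [W.periodic]; exact hom.2
    · intro t ht1 ht2 hte
      have hmod := huniq t hte
      have hmod2 : t % k = o % k := by rw [hmod, Nat.mod_eq_of_lt hom.1]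
      have hdvd : k ∣ t - o := (Nat.modEq_iff_dvd' (by omega)).mp hmod2.symm
      obtain ⟨u, hu⟩ := hdvd
      have : k ≤ k * u ∨ k * u = 0 := by
        rcases Nat.eq_zero_or_pos u with h | h
        · right; simp [h]
        · exact Or.inl (Nat.le_mul_of_pos_right k h)
      omega
  calc W.duration c = W.tt c o (o + k) := (tt_window W o).symm
    _ ≤ W.RT c d := le_RT hc W hk hmem

lemma counts_all_one (W : CWalk n n) (hn : 0 < n) (d : Fin n) :
    ((Finset.range n).filter (fun t => W.seq t = d)).card = 1 := by
  by_contra hcon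
  have h2 : 2 ≤ ((Finset.range n).filter (fun t => W.seq t = d)).card := by
    have := count_pos W d
    omega
  have hlt : ∑ _e : Fin n, 1 <
      ∑ e : Fin n, ((Finset.range n).filter (fun t => W.seq t = e)).card := by
    apply Finset.sum_lt_sum
    · intro e _
      exact count_pos W e
    · exact ⟨d, Finset.mem_univ d, by omega⟩
  rw [sum_counts W] at hlt
  simp at hlt

lemma R_eq_duration_nwalk (hc : ∀ u v : Fin n, u ≠ v → 0 < c u v) (hn : 0 < n)
    (W : CWalk n n) : W.R c = W.duration c := by
  refine le_antisymm (R_le_duration hc W hn) ?_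
  have h := duration_le_RT_of_count_one hc W hn (counts_all_one W hn ⟨0, hn⟩)
  exact le_trans h (RT_le_R hc W hn ⟨0, hn⟩)

lemma Rstar_n_eq_TSPstar (hc : ∀ u v : Fin n, u ≠ v → 0 < c u v) (hn : 0 < n) :
    Rstar n c n = TSPstar n c := by
  unfold Rstar TSPstar
  congr 1
  ext T
  constructor
  · rintro ⟨W, rfl⟩
    exact ⟨W, R_eq_duration_nwalk hc hn W⟩
  · rintro ⟨W, rfl⟩
    exact ⟨W, (R_eq_duration_nwalk hc hn W).symm⟩

lemma exists_count_one_succ (hn : 2 ≤ n) (Y : CWalk n (n + 1)) :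
    ∃ d : Fin n, ((Finset.range (n + 1)).filter (fun t => Y.seq t = d)).card = 1 := by
  by_contra hcon
  push_neg at hcon
  have h2 : ∀ d : Fin n, 2 ≤ ((Finset.range (n + 1)).filter (fun t => Y.seq t = d)).card := by
    intro d
    have := count_pos Y d
    have := hcon d
    omega
  have hle : ∑ _d : Fin n, 2 ≤
      ∑ d : Fin n, ((Finset.range (n + 1)).filter (fun t => Y.seq t = d)).card :=
    Finset.sum_le_sum fun d _ => h2 d
  rw [sum_counts Y] at hle
  simp only [Finset.sum_const, Finset.card_univ, Fintype.card_fin, smul_eq_mul] at hle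
  omega

lemma duration_le_R_succ (hc : ∀ u v : Fin n, u ≠ v → 0 < c u v) (hn : 2 ≤ n)
    (Y : CWalk n (n + 1)) : Y.duration c ≤ Y.R c := by
  obtain ⟨d, hd⟩ := exists_count_one_succ hn Y
  have h := duration_le_RT_of_count_one hc Y (by omega) hd
  exact le_trans h (RT_le_R hc Y (by omega) d)


/-! ### Mod helpers -/

lemma mod_succ_lt {L t : ℕ} (h : t % L + 1 < L) : (t + 1) % L = t % L + 1 := by
  conv_lhs => rw [← Nat.mod_add_div t L]
  rw [Nat.add_right_comm, Nat.add_mul_mod_self_left]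
  exact Nat.mod_eq_of_lt h

lemma mod_succ_top {L t : ℕ} (h : t % L + 1 = L) : (t + 1) % L = 0 := by
  conv_lhs => rw [← Nat.mod_add_div t L]
  rw [Nat.add_right_comm, Nat.add_mul_mod_self_left, h, Nat.mod_self]

/-! ### Rotation -/

def rot (W : CWalk n k) (s : ℕ) : CWalk n k where
  seq t := W.seq (t + s)
  periodic i := by
    show W.seq (i + k + s) = W.seq (i + s)
    rw [show i + k + s = (i + s) + k by ring, W.periodic]
  step i := by
    show W.seq (i + s) ≠ W.seq (i + 1 + s)
    have h := W.step (i + s)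
    rwa [show i + s + 1 = (i + 1) + s by ring] at h
  covers d := by
    obtain ⟨o, hok, ho⟩ := exists_occ W d
    have hk : 0 < k := by omega
    refine ⟨(o + k - s % k) % k, Nat.mod_lt _ hk, ?_⟩
    have hsk : s % k < k := Nat.mod_lt _ hk
    have hdm : k * (s / k) + s % k = s := Nat.div_add_mod s k
    have harr : o + k - s % k + s = o + k * (1 + s / k) := by
      have hexp : k * (1 + s / k) = k + k * (s / k) := by ring
      omega
    have hmod : ((o + k - s % k) % k + s) % k = o % k := by
      rw [Nat.mod_add_mod, harr, Nat.add_mul_mod_self_left]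
    show W.seq ((o + k - s % k) % k + s) = d
    rw [seq_congr W hmod]
    exact ho

lemma rot_tt (W : CWalk n k) (s i j : ℕ) : (rot W s).tt c i j = W.tt c (i + s) (j + s) := by
  unfold CWalk.tt
  rw [Finset.sum_Ico_eq_sum_range, Finset.sum_Ico_eq_sum_range]
  rw [show j + s - (i + s) = j - i by omega]
  refine Finset.sum_congr rfl fun t _ => ?_
  show c (W.seq (i + t + s)) (W.seq (i + t + 1 + s)) = c (W.seq (i + s + t)) (W.seq (i + s + t + 1))
  rw [show i + t + s = i + s + t by ring, show i + t + 1 + s = i + s + t + 1 by ring]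

lemma rot_duration (W : CWalk n k) (s : ℕ) : (rot W s).duration c = W.duration c := by
  unfold CWalk.duration
  rw [show (W.tt c 0 k : ℝ) = W.tt c s (s + k) from (tt_window W s).symm, rot_tt]
  rw [show (0:ℕ) + s = s by ring, show k + s = s + k by ring]

lemma rot_RTset (W : CWalk n k) (hk : 0 < k) (s : ℕ) (d : Fin n) :
    RTset c (rot W s) d = RTset c W d := by
  ext T
  constructor
  · rintro ⟨i, j, hij, hi, hj, hbet, rfl⟩
    refine ⟨i + s, j + s, by omega, hi, hj, ?_, rot_tt (c := c) W s i j⟩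
    intro t ht1 ht2
    have h : W.seq (t - s + s) ≠ d := hbet (t - s) (by omega) (by omega)
    rwa [show t - s + s = t by omega] at h
  · rintro ⟨i, j, hij, hi, hj, hbet, rfl⟩
    refine ⟨i + s * k - s, j + s * k - s, by
        have := Nat.le_mul_of_pos_right s hk
        omega, ?_, ?_, ?_, ?_⟩
    · show W.seq (i + s * k - s + s) = d
      rw [show i + s * k - s + s = i + s * k by
        have := Nat.le_mul_of_pos_right s hk; omega]
      rw [seq_add_mul]
      exact hi
    · show W.seq (j + s * k - s + s) = d
      rw [show j + s * k - s + s = j + s * k by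
        have := Nat.le_mul_of_pos_right s hk; omega]
      rw [seq_add_mul]
      exact hj
    · intro t ht1 ht2
      show W.seq (t + s) ≠ d
      have hsk := Nat.le_mul_of_pos_right s hk
      have h := hbet (t + s - s * k) (by omega) (by omega)
      have heq : W.seq (t + s) = W.seq (t + s - s * k) := by
        conv_lhs => rw [show t + s = (t + s - s * k) + s * k by omega]
        exact seq_add_mul W _ s
      rw [heq]
      exact h
    · have hsk := Nat.le_mul_of_pos_right s hk
      rw [rot_tt]
      rw [show i + s * k - s + s = i + s * k by omega,
          show j + s * k - s + s = j + s * k by omega]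
      exact (tt_shift_mul W i j s).symm

lemma rot_R (W : CWalk n k) (hk : 0 < k) (s : ℕ) : (rot W s).R c = W.R c := by
  have hRT : ∀ d, (rot W s).RT c d = W.RT c d := by
    intro d
    rw [RT_eq_sSup, RT_eq_sSup, rot_RTset W hk s d]
  unfold CWalk.R
  congr 1
  ext T
  constructor
  · rintro ⟨d, rfl⟩; exact ⟨d, hRT d⟩
  · rintro ⟨d, rfl⟩; exact ⟨d, (hRT d).symm⟩

/-! ### Segment extraction -/

def segWalk (W : CWalk n k) (i L : ℕ) (hL : 0 < L) (hteq : W.seq (i + L) = W.seq i)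
    (hcov : ∀ d : Fin n, ∃ t, i ≤ t ∧ t < i + L ∧ W.seq t = d) : CWalk n L where
  seq t := W.seq (i + t % L)
  periodic t := by
    show W.seq (i + (t + L) % L) = W.seq (i + t % L)
    rw [Nat.add_mod_right]
  step t := by
    have hmod := Nat.mod_lt t hL
    show W.seq (i + t % L) ≠ W.seq (i + (t + 1) % L)
    rcases Nat.lt_or_ge (t % L + 1) L with h | h
    · rw [mod_succ_lt h]
      have hstep := W.step (i + t % L)
      rwa [show i + t % L + 1 = i + (t % L + 1) by ring] at hstep
    · have hmL : t % L + 1 = L := by omega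
      rw [mod_succ_top hmL]
      have hstep := W.step (i + t % L)
      rw [show i + t % L + 1 = i + L by omega, hteq] at hstep
      simpa using hstep
  covers d := by
    obtain ⟨t, h1, h2, h3⟩ := hcov d
    refine ⟨t - i, by omega, ?_⟩
    show W.seq (i + (t - i) % L) = d
    rw [Nat.mod_eq_of_lt (by omega), show i + (t - i) = t by omega]
    exact h3

lemma segWalk_duration (W : CWalk n k) (i L : ℕ) (hL : 0 < L) (hteq : W.seq (i + L) = W.seq i)
    (hcov : ∀ d : Fin n, ∃ t, i ≤ t ∧ t < i + L ∧ W.seq t = d) :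
    (segWalk W i L hL hteq hcov).duration c = W.tt c i (i + L) := by
  unfold CWalk.duration CWalk.tt
  rw [Finset.sum_Ico_eq_sum_range (f := fun t => c (W.seq t) (W.seq (t + 1))),
      show i + L - i = L by omega]
  rw [show Finset.Ico 0 L = Finset.range L by rw [Finset.range_eq_Ico]]
  refine Finset.sum_congr rfl fun t ht => ?_
  have htL : t < L := Finset.mem_range.mp ht
  show c (W.seq (i + t % L)) (W.seq (i + (t + 1) % L)) = c (W.seq (i + t)) (W.seq (i + t + 1))
  rw [Nat.mod_eq_of_lt htL]
  rcases Nat.lt_or_ge (t + 1) L with h | h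
  · rw [Nat.mod_eq_of_lt h, show i + (t + 1) = i + t + 1 by ring]
  · have ht1 : t + 1 = L := by omega
    rw [ht1, Nat.mod_self, Nat.add_zero, ← hteq, show i + L = i + t + 1 by omega]

/-! ### Shortcut step -/

lemma delWalk (htri : ∀ u v w : Fin n, c u w ≤ c u v + c v w) {m : ℕ} (hm3 : 3 ≤ m)
    (W : CWalk n (m + 1)) (h02 : W.seq 0 ≠ W.seq 2)
    (hdup : ∃ o, o < m + 1 ∧ o ≠ 1 ∧ W.seq o = W.seq 1) :
    ∃ W' : CWalk n m, W'.duration c ≤ W.duration c := by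
  have hm0 : 0 < m := by omega
  refine ⟨⟨fun t => W.seq (if t % m = 0 then 0 else t % m + 1), ?_, ?_, ?_⟩, ?_⟩
  · intro t
    show W.seq (if (t + m) % m = 0 then 0 else (t + m) % m + 1)
        = W.seq (if t % m = 0 then 0 else t % m + 1)
    rw [Nat.add_mod_right]
  · intro t
    have hmod := Nat.mod_lt t hm0
    show W.seq (if t % m = 0 then 0 else t % m + 1)
        ≠ W.seq (if (t + 1) % m = 0 then 0 else (t + 1) % m + 1)
    rcases eq_or_ne (t % m) 0 with h0 | h0
    · have h1 : (t + 1) % m = 1 := by rw [mod_succ_lt (by omega), h0]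
      rw [h0, h1]
      simpa using h02
    · rcases Nat.lt_or_ge (t % m + 1) m with h | h
      · have h1 : (t + 1) % m = t % m + 1 := mod_succ_lt h
        rw [h1, if_neg h0, if_neg (by omega)]
        have hstep := W.step (t % m + 1)
        rwa [show t % m + 1 + 1 = t % m + 2 by ring] at hstep
      · have hmL : t % m + 1 = m := by omega
        rw [mod_succ_top hmL, if_neg h0, if_pos rfl, hmL]
        have hstep := W.step m
        have hper : W.seq (m + 1) = W.seq 0 := by
          have := W.periodic 0
          rwa [zero_add] at this
        rwa [hper] at hstep
  · intro d
    obtain ⟨o, hom, ho⟩ := exists_occ W d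
    obtain ⟨o', ho'm, ho'1, ho'⟩ : ∃ o', o' < m + 1 ∧ o' ≠ 1 ∧ W.seq o' = d := by
      rcases eq_or_ne o 1 with h | h
      · obtain ⟨o2, h1, h2, h3⟩ := hdup
        rw [h] at ho
        exact ⟨o2, h1, h2, h3.trans ho⟩
      · exact ⟨o, hom, h, ho⟩
    rcases eq_or_ne o' 0 with h0 | h0
    · refine ⟨0, by omega, ?_⟩
      show W.seq (if 0 % m = 0 then 0 else 0 % m + 1) = d
      rw [if_pos (Nat.zero_mod m)]
      rw [← h0]; exact ho'
    · refine ⟨o' - 1, by omega, ?_⟩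
      show W.seq (if (o' - 1) % m = 0 then 0 else (o' - 1) % m + 1) = d
      rw [Nat.mod_eq_of_lt (by omega), if_neg (by omega), show o' - 1 + 1 = o' by omega]
      exact ho'
  · obtain ⟨mm, hmm⟩ : ∃ mm, m = mm + 1 := ⟨m - 1, by omega⟩
    show ∑ t ∈ Finset.Ico 0 m,
        c (W.seq (if t % m = 0 then 0 else t % m + 1))
          (W.seq (if (t + 1) % m = 0 then 0 else (t + 1) % m + 1)) ≤ W.duration c
    have hterm : ∀ t < m,
        c (W.seq (if t % m = 0 then 0 else t % m + 1))
          (W.seq (if (t + 1) % m = 0 then 0 else (t + 1) % m + 1))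
        = if t = 0 then c (W.seq 0) (W.seq 2)
          else c (W.seq (t + 1)) (W.seq (t + 2)) := by
      intro t htm
      have htmod : t % m = t := Nat.mod_eq_of_lt htm
      rcases eq_or_ne t 0 with h0 | h0
      · subst h0
        have h1 : (0 + 1) % m = 1 := Nat.mod_eq_of_lt (by omega)
        rw [if_pos rfl, htmod, if_pos rfl, h1, if_neg (by omega)]
      · rw [if_neg h0, htmod, if_neg h0]
        rcases Nat.lt_or_ge (t + 1) m with h | h
        · rw [Nat.mod_eq_of_lt h, if_neg (by omega)]
        · have hz : (t + 1) % m = 0 := by rw [show t + 1 = m by omega, Nat.mod_self]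
          rw [hz, if_pos rfl]
          have hper : W.seq (0 : ℕ) = W.seq (t + 2) := by
            have h' := W.periodic 0
            rw [zero_add] at h'
            rw [show t + 2 = m + 1 by omega]
            exact h'.symm
          rw [hper]
    rw [show Finset.Ico 0 m = Finset.range (mm + 1) by
      rw [Finset.range_eq_Ico, ← hmm]]
    rw [Finset.sum_congr rfl (fun t ht => hterm t (by
      have := Finset.mem_range.mp ht; omega))]
    have hsplit : (∑ t ∈ Finset.range (mm + 1),
        (if t = 0 then c (W.seq 0) (W.seq 2) else c (W.seq (t + 1)) (W.seq (t + 2))))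
        = (∑ x ∈ Finset.range mm, c (W.seq (x + 2)) (W.seq (x + 3))) + c (W.seq 0) (W.seq 2) := by
      rw [Finset.sum_range_succ']
      have h0 : (if (0:ℕ) = 0 then c (W.seq 0) (W.seq 2)
          else c (W.seq (0 + 1)) (W.seq (0 + 2))) = c (W.seq 0) (W.seq 2) := by simp
      rw [h0]
      congr 1
    have hdur : W.duration c
        = (∑ x ∈ Finset.range mm, c (W.seq (x + 2)) (W.seq (x + 3)))
          + c (W.seq 1) (W.seq 2) + c (W.seq 0) (W.seq 1) := by
      show W.tt c 0 (m + 1) = _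
      unfold CWalk.tt
      rw [show Finset.Ico 0 (m + 1) = Finset.range (mm + 1 + 1) by
        rw [Finset.range_eq_Ico, hmm]]
      rw [Finset.sum_range_succ']
      rw [Finset.sum_range_succ' (fun x => c (W.seq (x + 1)) (W.seq (x + 1 + 1))) mm]
    rw [hsplit, hdur]
    have htr := htri (W.seq 0) (W.seq 1) (W.seq 2)
    linarith

lemma dup_of_ne_mod {M : ℕ} (hM : 0 < M) (W : CWalk n M) {t1 t2 : ℕ}
    (h : W.seq t1 = W.seq t2) (hne : t1 % M ≠ t2 % M) :
    ∃ a b, a < M ∧ b < M ∧ a ≠ b ∧ W.seq a = W.seq t1 ∧ W.seq b = W.seq t1 :=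
  ⟨t1 % M, t2 % M, Nat.mod_lt _ hM, Nat.mod_lt _ hM, hne, seq_mod W t1,
    (seq_mod W t2).trans h.symm⟩

lemma shortcut_step (htri : ∀ u v w : Fin n, c u w ≤ c u v + c v w) (hn3 : 3 ≤ n)
    {m : ℕ} (hm : n ≤ m) (W : CWalk n (m + 1)) :
    ∃ W' : CWalk n m, W'.duration c ≤ W.duration c := by
  classical
  have hM0 : 0 < m + 1 := by omega
  obtain ⟨a0, ha0, b0, hb0, hab, hfab⟩ :
      ∃ x ∈ Finset.range (m + 1), ∃ y ∈ Finset.range (m + 1), x ≠ y ∧ W.seq x = W.seq y := by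
    apply Finset.exists_ne_map_eq_of_card_lt_of_maps_to (t := (Finset.univ : Finset (Fin n)))
    · simp only [Finset.card_range, Finset.card_univ, Fintype.card_fin]
      omega
    · exact fun x _ => Finset.mem_univ (W.seq x)
  have hfind : ∃ p, 1 ≤ p ∧
      (∃ a b, a < m + 1 ∧ b < m + 1 ∧ a ≠ b ∧ W.seq a = W.seq p ∧ W.seq b = W.seq p) ∧
      W.seq (p - 1) ≠ W.seq (p + 1) := by
    by_contra hcon
    push_neg at hcon
    set p₀ := a0 + (m + 1) with hp₀
    have hseq0 : W.seq p₀ = W.seq a0 := W.periodic a0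
    have hDup0 : ∃ a b, a < m + 1 ∧ b < m + 1 ∧ a ≠ b ∧
        W.seq a = W.seq p₀ ∧ W.seq b = W.seq p₀ := by
      rw [hseq0]
      exact ⟨a0, b0, Finset.mem_range.mp ha0, Finset.mem_range.mp hb0, hab, rfl, hfab.symm⟩
    have hDup1 : ∃ a b, a < m + 1 ∧ b < m + 1 ∧ a ≠ b ∧
        W.seq a = W.seq (p₀ + 1) ∧ W.seq b = W.seq (p₀ + 1) := by
      have heq := hcon p₀ (by omega) hDup0
      apply dup_of_ne_mod hM0 W heq.symm
      intro hmod
      have hdvd : (m + 1) ∣ (p₀ + 1) - (p₀ - 1) :=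
        (Nat.modEq_iff_dvd' (by omega)).mp hmod.symm
      rw [show p₀ + 1 - (p₀ - 1) = 2 by omega] at hdvd
      have := Nat.le_of_dvd (by omega) hdvd
      omega
    have hQ : ∀ j,
        (∃ a b, a < m + 1 ∧ b < m + 1 ∧ a ≠ b ∧
          W.seq a = W.seq (p₀ + j) ∧ W.seq b = W.seq (p₀ + j)) ∧
        (∃ a b, a < m + 1 ∧ b < m + 1 ∧ a ≠ b ∧
          W.seq a = W.seq (p₀ + j + 1) ∧ W.seq b = W.seq (p₀ + j + 1)) := by
      intro j
      induction j with
      | zero => exact ⟨by simpa using hDup0, by simpa using hDup1⟩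
      | succ j ih =>
          have heq := hcon (p₀ + j + 1) (by omega) ih.2
          rw [show p₀ + j + 1 - 1 = p₀ + j by omega] at heq
          constructor
          · have h' := ih.2
            rwa [show p₀ + j + 1 = p₀ + (j + 1) by ring] at h'
          · have h' := ih.1
            rw [heq] at h'
            rwa [show p₀ + j + 1 + 1 = p₀ + (j + 1) + 1 by ring] at h'
    have hE : ∀ j, W.seq (p₀ + j + 2) = W.seq (p₀ + j) := by
      intro j
      have heq := hcon (p₀ + j + 1) (by omega) (hQ j).2
      rw [show p₀ + j + 1 - 1 = p₀ + j by omega,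
        show p₀ + j + 1 + 1 = p₀ + j + 2 by ring] at heq
      exact heq.symm
    have hpar : ∀ j, W.seq (p₀ + 2 * j) = W.seq p₀ ∧
        W.seq (p₀ + (2 * j + 1)) = W.seq (p₀ + 1) := by
      intro j
      induction j with
      | zero => constructor <;> simp
      | succ j ih =>
          constructor
          · have h' := hE (2 * j)
            rw [show p₀ + 2 * (j + 1) = p₀ + 2 * j + 2 by ring, h']
            exact ih.1
          · have h' := hE (2 * j + 1)
            rw [show p₀ + (2 * (j + 1) + 1) = p₀ + (2 * j + 1) + 2 by ring, h']
            exact ih.2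
    obtain ⟨e, he1, he2⟩ : ∃ e : Fin n, e ≠ W.seq p₀ ∧ e ≠ W.seq (p₀ + 1) := by
      by_contra hcon2
      push_neg at hcon2
      have hsub : (Finset.univ : Finset (Fin n)) ⊆ {W.seq p₀, W.seq (p₀ + 1)} := by
        intro e _
        simp only [Finset.mem_insert, Finset.mem_singleton]
        rcases eq_or_ne e (W.seq p₀) with h | h
        · exact Or.inl h
        · exact Or.inr (hcon2 e h)
      have h1 := Finset.card_le_card hsub
      have h2 : ({W.seq p₀, W.seq (p₀ + 1)} : Finset (Fin n)).card ≤ 2 := by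
        apply le_trans (Finset.card_insert_le _ _)
        simp
      rw [Finset.card_univ, Fintype.card_fin] at h1
      omega
    obtain ⟨o, hoM, hoe⟩ := exists_occ W e
    have hbig : W.seq (o + p₀ * (m + 1)) = e := by rw [seq_add_mul]; exact hoe
    have htp : p₀ ≤ o + p₀ * (m + 1) := by
      have : p₀ ≤ p₀ * (m + 1) := Nat.le_mul_of_pos_right p₀ hM0
      omega
    obtain ⟨j, hj⟩ : ∃ j, o + p₀ * (m + 1) = p₀ + j := ⟨o + p₀ * (m + 1) - p₀, by omega⟩
    rw [hj] at hbig
    rcases Nat.even_or_odd j with ⟨u, hu⟩ | ⟨u, hu⟩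
    · have hh := (hpar u).1
      rw [show p₀ + 2 * u = p₀ + j by omega] at hh
      rw [hbig] at hh
      exact he1 hh
    · have hh := (hpar u).2
      rw [show p₀ + (2 * u + 1) = p₀ + j by omega] at hh
      rw [hbig] at hh
      exact he2 hh
  obtain ⟨p, hp1, hpD, hpne⟩ := hfind
  set p' := (p - 1) % (m + 1) + 1 with hp'
  have hmodlt : (p - 1) % (m + 1) < m + 1 := Nat.mod_lt _ hM0
  have hcong1 : p' % (m + 1) = p % (m + 1) := by
    rw [hp', Nat.mod_add_mod, show p - 1 + 1 = p by omega]
  have hcong2 : (p' + 1) % (m + 1) = (p + 1) % (m + 1) := by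
    rw [Nat.add_mod p' 1, hcong1, ← Nat.add_mod]
  have hcong0 : (p' - 1) % (m + 1) = (p - 1) % (m + 1) := by
    rw [show p' - 1 = (p - 1) % (m + 1) by omega, Nat.mod_mod_of_dvd _ dvd_rfl]
  set s := p' - 1 with hs
  have h02 : (rot W s).seq 0 ≠ (rot W s).seq 2 := by
    show W.seq (0 + s) ≠ W.seq (2 + s)
    have e0 : (0 + s) % (m + 1) = (p - 1) % (m + 1) := by
      rw [zero_add]
      exact hcong0
    have e2 : (2 + s) % (m + 1) = (p + 1) % (m + 1) := by
      rw [show 2 + s = p' + 1 by omega]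
      exact hcong2
    rw [seq_congr W e0, seq_congr W e2]
    exact hpne
  have hdup1 : ∃ o, o < m + 1 ∧ o ≠ 1 ∧ (rot W s).seq o = (rot W s).seq 1 := by
    obtain ⟨a, b, haM, hbM, habne, ha, hb⟩ := hpD
    have h1p : (rot W s).seq 1 = W.seq p := by
      show W.seq (1 + s) = W.seq p
      apply seq_congr W
      rw [show 1 + s = p' by omega]
      exact hcong1
    have key : ∀ x, x < m + 1 → W.seq x = W.seq p →
        ((x + (m + 1) - s) % (m + 1) < m + 1 ∧
         (rot W s).seq ((x + (m + 1) - s) % (m + 1)) = (rot W s).seq 1 ∧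
         ((x + (m + 1) - s) % (m + 1) + s) % (m + 1) = x % (m + 1)) := by
      intro x hx hxp
      have hmod : ((x + (m + 1) - s) % (m + 1) + s) % (m + 1) = x % (m + 1) := by
        rw [Nat.mod_add_mod, show x + (m + 1) - s + s = x + (m + 1) by omega,
          Nat.add_mod_right]
      refine ⟨Nat.mod_lt _ hM0, ?_, hmod⟩
      rw [h1p]
      show W.seq ((x + (m + 1) - s) % (m + 1) + s) = W.seq p
      rw [seq_congr W hmod]
      exact hxp
    obtain ⟨hlta, hseqa, hmoda⟩ := key a haM ha
    obtain ⟨hltb, hseqb, hmodb⟩ := key b hbM hb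
    rcases eq_or_ne ((a + (m + 1) - s) % (m + 1)) 1 with hA | hA
    · refine ⟨(b + (m + 1) - s) % (m + 1), hltb, ?_, hseqb⟩
      intro hB
      apply habne
      have h' : a % (m + 1) = b % (m + 1) := by rw [← hmoda, ← hmodb, hA, hB]
      rwa [Nat.mod_eq_of_lt haM, Nat.mod_eq_of_lt hbM] at h'
    · exact ⟨(a + (m + 1) - s) % (m + 1), hlta, hA, hseqa⟩
  obtain ⟨W', hW'⟩ := delWalk htri (by omega : 3 ≤ m) (rot W s) h02 hdup1
  refine ⟨W', ?_⟩
  rwa [rot_duration] at hW'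

lemma shortcut_to (htri : ∀ u v w : Fin n, c u w ≤ c u v + c v w) (hn3 : 3 ≤ n)
    {m m₀ : ℕ} (hm₀ : n ≤ m₀) (hle : m₀ ≤ m) (W : CWalk n m) :
    ∃ W' : CWalk n m₀, W'.duration c ≤ W.duration c := by
  obtain ⟨j, rfl⟩ : ∃ j, m = m₀ + j := ⟨m - m₀, by omega⟩
  clear hle
  induction j with
  | zero => exact ⟨W, le_rfl⟩
  | succ j ih =>
      obtain ⟨W1, hW1⟩ := shortcut_step htri hn3 (by omega : n ≤ m₀ + j) W
      obtain ⟨W', hW'⟩ := ih W1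
      exact ⟨W', le_trans hW' hW1⟩


/-! ### n = 2 special lemmas -/

lemma two_periodic (W : CWalk 2 k) (i : ℕ) : W.seq (i + 2) = W.seq i := by
  have h1 := W.step i
  have h2 := W.step (i + 1)
  have key : ∀ a b e : Fin 2, a ≠ b → e ≠ b → a = e := by decide
  exact key _ _ _ (by simpa [show i + 1 + 1 = i + 2 by ring] using h2.symm) h1

lemma two_parity (W : CWalk 2 k) (i : ℕ) : W.seq i = W.seq (i % 2) := by
  induction i using Nat.strong_induction_on with
  | _ i ih =>
      rcases Nat.lt_or_ge i 2 with h | h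
      · rw [Nat.mod_eq_of_lt h]
      · have h1 : W.seq i = W.seq (i - 2) := by
          rw [show i = (i - 2) + 2 by omega]
          exact two_periodic W (i - 2)
        rw [h1, ih (i - 2) (by omega), show (i - 2) % 2 = i % 2 by omega]

lemma no_cwalk_two_odd {k : ℕ} (hk : k % 2 = 1) (W : CWalk 2 k) : False := by
  have h0 := W.periodic 0
  rw [zero_add] at h0
  have h1 := two_parity W k
  rw [hk] at h1
  exact W.step 0 (by rw [zero_add, ← h1, h0])

/-! ### Existence of basic walks -/

def idWalk (n : ℕ) (hn : 2 ≤ n) : CWalk n n where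
  seq i := ⟨i % n, Nat.mod_lt _ (by omega)⟩
  periodic i := by
    apply Fin.ext
    simp [Nat.add_mod_right]
  step i := by
    apply Fin.ne_of_val_ne
    simp only []
    have hmod := Nat.mod_lt i (show 0 < n by omega)
    rcases Nat.lt_or_ge (i % n + 1) n with h | h
    · rw [mod_succ_lt h]
      omega
    · rw [mod_succ_top (by omega)]
      omega
  covers d := ⟨d.val, d.isLt, by apply Fin.ext; simp [Nat.mod_eq_of_lt d.isLt]⟩

def patFn (n : ℕ) (hn : 3 ≤ n) (s : ℕ) : Fin n :=
  if s = 0 then ⟨0, by omega⟩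
  else if s = 1 then ⟨1, by omega⟩
  else if s = 2 then ⟨0, by omega⟩
  else ⟨min (s - 1) (n - 1), by omega⟩

def succWalk (n : ℕ) (hn : 3 ≤ n) : CWalk n (n + 1) where
  seq t := patFn n hn (t % (n + 1))
  periodic t := by
    beta_reduce
    rw [Nat.add_mod_right]
  step t := by
    have hmod := Nat.mod_lt t (show 0 < n + 1 by omega)
    apply Fin.ne_of_val_ne
    beta_reduce
    rcases Nat.lt_or_ge (t % (n + 1) + 1) (n + 1) with h | h
    · rw [mod_succ_lt h]
      unfold patFn
      rcases eq_or_ne (t % (n + 1)) 0 with h0 | h0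
      · rw [if_pos h0, h0, if_neg (by omega), if_pos (by omega)]
        simp
      · rcases eq_or_ne (t % (n + 1)) 1 with h1 | h1
        · rw [if_neg h0, if_pos h1, h1, if_neg (by omega), if_neg (by omega),
            if_pos (by omega)]
          simp
        · rcases eq_or_ne (t % (n + 1)) 2 with h2 | h2
          · rw [if_neg h0, if_neg h1, if_pos h2, h2, if_neg (by omega), if_neg (by omega),
              if_neg (by omega)]
            simp
            omega
          · rw [if_neg h0, if_neg h1, if_neg h2, if_neg (by omega), if_neg (by omega),
              if_neg (by omega)]
            simp
            omega
    · have hs : t % (n + 1) = n := by omega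
      rw [mod_succ_top (by omega), hs]
      unfold patFn
      rw [if_neg (by omega), if_neg (by omega), if_neg (by omega), if_pos rfl]
      simp
      omega
  covers d := by
    rcases Nat.lt_or_ge d.val 2 with h | h
    · refine ⟨d.val, by omega, ?_⟩
      beta_reduce
      rw [Nat.mod_eq_of_lt (by omega)]
      unfold patFn
      rcases eq_or_ne d.val 0 with h0 | h0
      · rw [if_pos h0]
        apply Fin.ext
        simp
        omega
      · have h1 : d.val = 1 := by omega
        rw [if_neg h0, if_pos h1]
        apply Fin.ext
        simp
        omega
    · refine ⟨d.val + 1, by omega, ?_⟩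
      beta_reduce
      rw [Nat.mod_eq_of_lt (by omega)]
      unfold patFn
      rw [if_neg (by omega), if_neg (by omega), if_neg (by omega)]
      apply Fin.ext
      simp
      omega

/-! ### Lifting a walk to a multiple period -/

def liftWalk (W : CWalk n k) (b : ℕ) (hdvd : k ∣ b) (hkb : k ≤ b) : CWalk n b where
  seq := W.seq
  periodic i := by
    obtain ⟨u, hu⟩ := hdvd
    rw [hu, show k * u = u * k by ring]
    exact seq_add_mul W i u
  step := W.step
  covers d := by
    obtain ⟨o, ho, h⟩ := exists_occ W d
    exact ⟨o, by omega, h⟩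

lemma liftWalk_R (W : CWalk n k) (b : ℕ) (hdvd : k ∣ b) (hkb : k ≤ b) :
    (liftWalk W b hdvd hkb).R c = W.R c := rfl

/-! ### Lower bound core -/

lemma R_ge_core (hc : ∀ u v : Fin n, u ≠ v → 0 < c u v) (hn2 : 2 ≤ n) (W : CWalk n k) :
    ∃ L, n ≤ L ∧ (n ∣ k ∨ n + 1 ≤ L) ∧ ∃ V : CWalk n L, V.duration c ≤ W.R c := by
  have hk : 0 < k := k_pos W (by omega)
  obtain ⟨i₀, hi₀k, hmax, hcov⟩ := exists_maxgap W hk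
  obtain ⟨hlt, hd, hle⟩ := nxt_spec W hk (W.seq i₀) i₀
  set j₀ := nxt W (W.seq i₀) i₀ with hj₀
  set L := j₀ - i₀ with hL
  have hL0 : 0 < L := by omega
  have hteq : W.seq (i₀ + L) = W.seq i₀ := by
    rw [show i₀ + L = j₀ by omega]
    exact hd
  have hcov' : ∀ d : Fin n, ∃ t, i₀ ≤ t ∧ t < i₀ + L ∧ W.seq t = d := by
    intro d
    obtain ⟨t, h1, h2, h3⟩ := hcov d
    rcases Nat.lt_or_ge t j₀ with h | h
    · exact ⟨t, h1, by omega, h3⟩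
    · have ht : t = j₀ := by omega
      refine ⟨i₀, le_rfl, by omega, ?_⟩
      rw [← hd, ← ht]
      exact h3
  set V := segWalk W i₀ L hL0 hteq hcov' with hV
  have hdur : V.duration c ≤ W.R c := by
    rw [hV, segWalk_duration, show i₀ + L = j₀ by omega]
    have hmem := mem_RTset_nxt (c := c) W hk (rfl : W.seq i₀ = W.seq i₀)
    exact le_trans (le_RT hc W hk hmem) (RT_le_R hc W (by omega) (W.seq i₀))
  have hnL : n ≤ L := by
    have hsub : (Finset.univ : Finset (Fin n)) ⊆ (Finset.Ico i₀ (i₀ + L)).image W.seq := by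
      intro d _
      obtain ⟨t, h1, h2, h3⟩ := hcov' d
      exact Finset.mem_image.mpr ⟨t, Finset.mem_Ico.mpr ⟨h1, h2⟩, h3⟩
    have h1 := Finset.card_le_card hsub
    have h2 := Finset.card_image_le (s := Finset.Ico i₀ (i₀ + L)) (f := W.seq)
    rw [Finset.card_univ, Fintype.card_fin] at h1
    rw [Nat.card_Ico] at h2
    omega
  refine ⟨L, hnL, ?_, V, hdur⟩
  rcases Nat.lt_or_ge n L with h | h
  · exact Or.inr (by omega)
  · refine Or.inl (dvd_of_gaps_le W (by omega) ?_)
    intro i hi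
    have := hmax i hi
    have hlt' := (nxt_spec W hk (W.seq i) i).1
    omega

lemma TSP_le_R (hc : ∀ u v : Fin n, u ≠ v → 0 < c u v)
    (htri : ∀ u v w : Fin n, c u w ≤ c u v + c v w) (hn2 : 2 ≤ n) (W : CWalk n k) :
    TSPstar n c ≤ W.R c := by
  rcases Nat.lt_or_ge n 3 with h3 | h3
  · have hn : n = 2 := by omega
    subst hn
    have hk : 0 < k := k_pos W (by omega)
    have h2 : W.seq (0 + 2) = W.seq 0 := two_periodic W 0
    have hcov2 : ∀ d : Fin 2, ∃ t, 0 ≤ t ∧ t < 0 + 2 ∧ W.seq t = d := by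
      intro d
      have key : ∀ a b e : Fin 2, a ≠ b → e = a ∨ e = b := by decide
      rcases key (W.seq 0) (W.seq 1) d (W.step 0) with h | h
      · exact ⟨0, le_rfl, by omega, h.symm⟩
      · exact ⟨1, by omega, by omega, h.symm⟩
    set V := segWalk W 0 2 (by omega) h2 hcov2 with hV
    have hdur : V.duration c ≤ W.R c := by
      rw [hV, segWalk_duration]
      have hmem : W.tt c 0 (0 + 2) ∈ RTset c W (W.seq 0) := by
        refine ⟨0, 0 + 2, by omega, rfl, h2, ?_, rfl⟩
        intro t ht1 ht2
        have ht : t = 1 := by omega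
        rw [ht]
        exact (W.step 0).symm
      exact le_trans (le_RT hc W hk hmem) (RT_le_R hc W (by omega) (W.seq 0))
    exact le_trans (TSPstar_le_duration hc V) hdur
  · obtain ⟨L, hnL, -, V, hV⟩ := R_ge_core hc hn2 W
    obtain ⟨V', hV'⟩ := shortcut_to htri h3 le_rfl hnL V
    exact le_trans (TSPstar_le_duration hc V') (le_trans hV' hV)

lemma Rsucc_le_R (hc : ∀ u v : Fin n, u ≠ v → 0 < c u v)
    (htri : ∀ u v w : Fin n, c u w ≤ c u v + c v w) (hn3 : 3 ≤ n)
    (hnd : ¬ n ∣ k) (W : CWalk n k) : Rstar n c (n + 1) ≤ W.R c := by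
  obtain ⟨L, hnL, hor, V, hV⟩ := R_ge_core hc (by omega) W
  have hL1 : n + 1 ≤ L := hor.resolve_left hnd
  obtain ⟨V', hV'⟩ := shortcut_to htri hn3 (by omega) hL1 V
  calc Rstar n c (n + 1) ≤ V'.R c := Rstar_le_R hc (by omega) V'
    _ ≤ V'.duration c := R_le_duration hc V' (by omega)
    _ ≤ V.duration c := hV'
    _ ≤ W.R c := hV


/-! ### The phi reindexing machinery -/

def delP (m r q t : ℕ) : Prop := t % m = 0 ∧ r ≤ (t / m) % q

instance delP_dec (m r q : ℕ) : DecidablePred (delP m r q) := fun t => by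
  unfold delP
  infer_instance

def phi (m r q : ℕ) : ℕ → ℕ
  | 0 => 0
  | i + 1 => if delP m r q (phi m r q i + 1) then phi m r q i + 2 else phi m r q i + 1

variable {m r q : ℕ}

lemma phi_zero : phi m r q 0 = 0 := rfl

lemma phi_succ (i : ℕ) : phi m r q (i + 1)
    = if delP m r q (phi m r q i + 1) then phi m r q i + 2 else phi m r q i + 1 := rfl

lemma not_delP_phi (hm : 2 ≤ m) (hr : 1 ≤ r) (i : ℕ) : ¬ delP m r q (phi m r q i) := by
  induction i with
  | zero =>
      intro h
      have := h.2
      simp [phi] at this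
      omega
  | succ i ih =>
      rw [phi_succ]
      split
      · next hdel =>
          intro hcon
          have h1 := hdel.1
          have h2 := hcon.1
          have : (phi m r q i + 2) % m = 1 := by
            rw [show phi m r q i + 2 = (phi m r q i + 1) + 1 by ring]
            rw [mod_succ_lt (by omega : (phi m r q i + 1) % m + 1 < m), h1]
          omega
      · next hdel => exact hdel

lemma phi_succ_bounds (i : ℕ) :
    phi m r q i + 1 ≤ phi m r q (i + 1) ∧ phi m r q (i + 1) ≤ phi m r q i + 2 := by
  rw [phi_succ]
  split <;> omega

lemma phi_strictMono : StrictMono (phi m r q) := by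
  apply strictMono_nat_of_lt_succ
  intro i
  have := phi_succ_bounds (m := m) (r := r) (q := q) i
  omega

lemma phi_ge (i : ℕ) : i ≤ phi m r q i := by
  induction i with
  | zero => simp [phi_zero]
  | succ i ih =>
      have := phi_succ_bounds (m := m) (r := r) (q := q) i
      omega

lemma phi_skip {i : ℕ} (h : phi m r q (i + 1) ≠ phi m r q i + 1) :
    phi m r q (i + 1) = phi m r q i + 2 ∧ delP m r q (phi m r q i + 1) := by
  rw [phi_succ] at h ⊢
  by_cases hdel : delP m r q (phi m r q i + 1)
  · rw [if_pos hdel]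
    exact ⟨rfl, hdel⟩
  · rw [if_neg hdel] at h
    exact absurd rfl h

lemma phi_surj (hm : 2 ≤ m) (t : ℕ) (ht : ¬ delP m r q t) : ∃ i, phi m r q i = t := by
  have claim : ∀ t, (∃ i, phi m r q i = t) ∨ (delP m r q t ∧ ∃ i, phi m r q i = t + 1) := by
    intro t
    induction t with
    | zero => exact Or.inl ⟨0, rfl⟩
    | succ t ih =>
        rcases ih with ⟨i, hi⟩ | ⟨hdel, i, hi⟩
        · by_cases hdel : delP m r q (t + 1)
          · refine Or.inr ⟨hdel, i + 1, ?_⟩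
            rw [phi_succ, hi, if_pos hdel]
          · exact Or.inl ⟨i + 1, by rw [phi_succ, hi, if_neg hdel]⟩
        · exact Or.inl ⟨i, hi⟩
  rcases claim t with h | h
  · exact h
  · exact absurd h.1 ht

lemma delP_period (hm : 0 < m) (hq : 0 < q) (t : ℕ) :
    delP m r q (t + m * q) ↔ delP m r q t := by
  unfold delP
  rw [Nat.add_mul_mod_self_left, Nat.add_mul_div_left _ _ hm, Nat.add_mod_right]

lemma phi_add_k (hm : 0 < m) (hq : 0 < q) {k : ℕ} (hphik : phi m r q k = m * q) :
    ∀ i, phi m r q (i + k) = phi m r q i + m * q := by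
  intro i
  induction i with
  | zero =>
      rw [zero_add, hphik, phi_zero, zero_add]
  | succ i ih =>
      rw [show i + 1 + k = (i + k) + 1 by ring, phi_succ, ih, phi_succ]
      have hcond : delP m r q (phi m r q i + m * q + 1) ↔ delP m r q (phi m r q i + 1) := by
        rw [show phi m r q i + m * q + 1 = (phi m r q i + 1) + m * q by ring]
        exact delP_period hm hq _
      by_cases h : delP m r q (phi m r q i + 1)
      · rw [if_pos (hcond.mpr h), if_pos h]
        omega
      · rw [if_neg (fun hh => h (hcond.mp hh)), if_neg h]
        omega

lemma phi_k {n : ℕ} (hn : 3 ≤ n) (hm : m = n + 1) (hr : 1 ≤ r) (hrq : r ≤ q) {k : ℕ}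
    (hk : k = n * q + r) : phi m r q k = m * q := by
  have hm2 : 2 ≤ m := by omega
  rcases eq_or_lt_of_le hrq with hreq | hrlt
  · have hnone : ∀ t, ¬ delP m r q t := by
      rintro t ⟨h1, h2⟩
      have := Nat.mod_lt (t / m) (show 0 < q by omega)
      omega
    have hid : ∀ i, phi m r q i = i := by
      intro i
      induction i with
      | zero => rfl
      | succ i ih => rw [phi_succ, if_neg (hnone _), ih]
    rw [hid]
    have h1 : m * q = n * q + q := by rw [hm]; ring
    omega
  · have hA : ∀ i, i < m * r → phi m r q i = i := by
      intro i hi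
      induction i with
      | zero => rfl
      | succ i ih =>
          rw [phi_succ, ih (by omega)]
          have hnd : ¬ delP m r q (i + 1) := by
            rintro ⟨h1, h2⟩
            have hdiv : (i + 1) / m < r := by
              rw [Nat.div_lt_iff_lt_mul (by omega : 0 < m)]
              have : r * m = m * r := mul_comm r m
              omega
            rw [Nat.mod_eq_of_lt (by omega : (i + 1) / m < q)] at h2
            omega
          rw [if_neg hnd]
    have hrm0 : 0 < m * r := Nat.mul_pos (by omega) (by omega)
    have hBrm : phi m r q (m * r) = m * r + 1 := by
      obtain ⟨j, hj⟩ : ∃ j, m * r = j + 1 := ⟨m * r - 1, by omega⟩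
      have hdel : delP m r q (m * r) := by
        constructor
        · exact Nat.mul_mod_right m r
        · rw [Nat.mul_div_cancel_left _ (by omega : 0 < m),
            Nat.mod_eq_of_lt (by omega : r < q)]
      rw [hj, phi_succ, hA j (by omega), ← hj, if_pos hdel]
      omega
    have hB : ∀ j, j < (q - r) * n →
        phi m r q (m * r + j) = m * r + m * (j / n) + j % n + 1 := by
      intro j hj
      induction j with
      | zero =>
          rw [Nat.add_zero, hBrm, Nat.zero_div, Nat.zero_mod, Nat.mul_zero]
      | succ j ih =>
          have ihv := ih (by omega)
          rw [show m * r + (j + 1) = (m * r + j) + 1 by ring, phi_succ, ihv]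
          have hdm := Nat.div_add_mod j n
          have hbn : j % n < n := Nat.mod_lt _ (by omega)
          rcases Nat.lt_or_ge (j % n + 1) n with hb | hb
          · have hnd : ¬ delP m r q (m * r + m * (j / n) + j % n + 1 + 1) := by
              rintro ⟨h1, h2⟩
              have he : m * r + m * (j / n) + j % n + 1 + 1
                  = m * (r + j / n) + (j % n + 2) := by ring
              rw [he, Nat.mul_add_mod] at h1
              rw [Nat.mod_eq_of_lt (by omega : j % n + 2 < m)] at h1
              omega
            rw [if_neg hnd]
            have h1 : (j + 1) / n = j / n := by
              rw [show j + 1 = n * (j / n) + (j % n + 1) by omega,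
                Nat.mul_add_div (by omega), Nat.div_eq_of_lt hb]
              omega
            have h2 : (j + 1) % n = j % n + 1 := by
              rw [show j + 1 = n * (j / n) + (j % n + 1) by omega, Nat.mul_add_mod]
              exact Nat.mod_eq_of_lt hb
            rw [h1, h2]
            omega
          · have hbe : j % n + 1 = n := by omega
            have hj1 : j + 1 = n * (j / n + 1) := by
              have h' : n * (j / n + 1) = n * (j / n) + n := by ring
              omega
            have hlt2 : j / n + 1 < q - r := by
              by_contra hcon
              push_neg at hcon
              have hh : (q - r) * n ≤ (j / n + 1) * n := Nat.mul_le_mul_right n hcon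
              have he : (j / n + 1) * n = n * (j / n + 1) := mul_comm _ _
              omega
            have heq : m * r + m * (j / n) + j % n + 1 + 1 = m * (r + j / n + 1) := by
              have h' : m * (r + j / n + 1) = m * r + m * (j / n) + m := by ring
              omega
            have hlt3 : r + j / n + 1 < q := by omega
            have hdel : delP m r q (m * r + m * (j / n) + j % n + 1 + 1) := by
              constructor
              · rw [heq]
                exact Nat.mul_mod_right m _
              · rw [heq, Nat.mul_div_cancel_left _ (by omega : 0 < m),
                  Nat.mod_eq_of_lt hlt3]
                exact le_trans (Nat.le_add_right r (j / n)) (Nat.le_succ _)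
            rw [if_pos hdel]
            have h1 : (j + 1) / n = j / n + 1 := by
              rw [hj1, Nat.mul_div_cancel_left _ (by omega : 0 < n)]
            have h2 : (j + 1) % n = 0 := by
              rw [hj1]
              exact Nat.mul_mod_right n _
            rw [h1, h2]
            have h3 : m * (j / n + 1) = m * (j / n) + m := by ring
            omega
    have hsub1 : (q - r) * n + r * n = q * n := by
      have := Nat.sub_mul q r n
      have h3 : r * n ≤ q * n := Nat.mul_le_mul_right n (by omega)
      omega
    have hk2 : k = m * r + (q - r) * n := by
      have e1 : m * r = n * r + r := by rw [hm]; ring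
      have e4 : n * q = q * n := mul_comm n q
      have e5 : n * r = r * n := mul_comm n r
      omega
    have hqr0 : 0 < (q - r) * n := Nat.mul_pos (by omega) (by omega)
    obtain ⟨jj, hjj⟩ : ∃ jj, (q - r) * n = jj + 1 := ⟨(q - r) * n - 1, by omega⟩
    have hjval : jj = n * (q - r - 1) + (n - 1) := by
      have e : n * (q - r - 1) + n = n * (q - r) := by
        have h' : n * (q - r - 1) + n = n * (q - r - 1 + 1) := by ring
        rw [h']
        congr 1
        omega
      have e2 : n * (q - r) = (q - r) * n := mul_comm _ _
      omega
    have hjdiv : jj / n = q - r - 1 := by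
      rw [hjval, Nat.mul_add_div (by omega), Nat.div_eq_of_lt (by omega)]
      omega
    have hjmod : jj % n = n - 1 := by
      rw [hjval, Nat.mul_add_mod, Nat.mod_eq_of_lt (by omega)]
    have hlast := hB jj (by omega)
    rw [hjdiv, hjmod] at hlast
    have hmq : m * r + m * (q - r - 1) + (n - 1) + 1 + 1 = m * q := by
      have e1 : m * (r + (q - r - 1) + 1) = m * q := by
        congr 1
        omega
      have e2 : m * (r + (q - r - 1) + 1) = m * r + m * (q - r - 1) + m := by ring
      omega
    have hnd : ¬ delP m r q (m * r + m * (q - r - 1) + (n - 1) + 1 + 1) := by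
      rintro ⟨h1, h2⟩
      rw [hmq, Nat.mul_div_cancel_left _ (by omega : 0 < m), Nat.mod_self] at h2
      omega
    rw [show k = (m * r + jj) + 1 by omega, phi_succ, hlast, if_neg hnd]
    omega

lemma exists_Z (hc : ∀ u v : Fin n, u ≠ v → 0 < c u v)
    (htri : ∀ u v w : Fin n, c u w ≤ c u v + c v w) (hn3 : 3 ≤ n) {k : ℕ}
    (hk2 : n ^ 2 - n ≤ k) (hnd : ¬ n ∣ k) (Y : CWalk n (n + 1)) :
    ∃ Z : CWalk n k, Z.R c ≤ Y.R c := by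
  classical
  have hn0 : 0 < n := by omega
  have hnn : n ^ 2 = n * n := by ring
  have hkn : n < k := by
    have h1 : 3 * n ≤ n * n := Nat.mul_le_mul_right n hn3
    omega
  -- find an ordered duplicate pair in Y
  obtain ⟨a, b, haR, hbR, hltab, heqab⟩ :
      ∃ a b, a < n + 1 ∧ b < n + 1 ∧ a < b ∧ Y.seq a = Y.seq b := by
    obtain ⟨a0, ha0, b0, hb0, hab, hfab⟩ :
        ∃ u ∈ Finset.range (n + 1), ∃ v ∈ Finset.range (n + 1), u ≠ v ∧ Y.seq u = Y.seq v := by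
      apply Finset.exists_ne_map_eq_of_card_lt_of_maps_to
        (t := (Finset.univ : Finset (Fin n)))
      · simp only [Finset.card_range, Finset.card_univ, Fintype.card_fin]
        omega
      · exact fun u _ => Finset.mem_univ (Y.seq u)
    rw [Finset.mem_range] at ha0 hb0
    rcases Nat.lt_or_ge a0 b0 with h | h
    · exact ⟨a0, b0, ha0, hb0, h, hfab⟩
    · exact ⟨b0, a0, hb0, ha0, by omega, hfab.symm⟩
  set j₀ := b - a with hj₀def
  have hj₀2 : 2 ≤ j₀ := by
    have hne := Y.step a
    have hba : b ≠ a + 1 := fun h => hne (by rw [← h]; exact heqab)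
    omega
  have hj₀n : j₀ ≤ n - 1 := by
    have hnot : ¬ (a = 0 ∧ b = n) := by
      rintro ⟨ha', hb'⟩
      have h1 := Y.step n
      have h2 : Y.seq (n + 1) = Y.seq 0 := by
        have := Y.periodic 0
        rwa [zero_add] at this
      apply h1
      rw [h2]
      rw [ha', hb'] at heqab
      exact heqab.symm
    rcases Nat.eq_zero_or_pos a with rfl | hapos
    · have hbn : b ≠ n := fun h => hnot ⟨rfl, h⟩
      omega
    · omega
  set Y1 := rot Y a with hY1
  have hx0 : Y1.seq j₀ = Y1.seq 0 := by
    show Y.seq (j₀ + a) = Y.seq (0 + a)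
    rw [show j₀ + a = b by omega, zero_add]
    exact heqab.symm
  set x := Y1.seq 0 with hxdef
  -- counting: x appears exactly twice, all others once
  set cnt : Fin n → ℕ := fun e => ((Finset.range (n + 1)).filter (fun t => Y1.seq t = e)).card
    with hcnt_def
  have hcntx : 2 ≤ cnt x := by
    have hsub : ({0, j₀} : Finset ℕ) ⊆ (Finset.range (n + 1)).filter (fun t => Y1.seq t = x) := by
      intro t ht
      simp only [Finset.mem_insert, Finset.mem_singleton] at ht
      rcases ht with rfl | rfl
      · exact Finset.mem_filter.mpr ⟨Finset.mem_range.mpr (by omega), rfl⟩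
      · exact Finset.mem_filter.mpr ⟨Finset.mem_range.mpr (by omega), hx0⟩
    have hcard := Finset.card_le_card hsub
    rwa [Finset.card_pair (by omega : (0 : ℕ) ≠ j₀)] at hcard
  have hcnt : ∀ e, cnt e = if e = x then 2 else 1 := by
    by_contra hcon
    push_neg at hcon
    obtain ⟨e₀, he₀⟩ := hcon
    have hge : ∀ e, (if e = x then 2 else 1) ≤ cnt e := by
      intro e
      by_cases h : e = x
      · rw [if_pos h, h]; exact hcntx
      · rw [if_neg h]; exact count_pos Y1 e
    have hstrict : (if e₀ = x then 2 else 1) < cnt e₀ := lt_of_le_of_ne (hge e₀) (Ne.symm he₀)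
    have hlt := Finset.sum_lt_sum (fun e _ => hge e) ⟨e₀, Finset.mem_univ e₀, hstrict⟩
    have h1 : ∑ e : Fin n, cnt e = n + 1 := sum_counts Y1
    have h2 : ∑ e : Fin n, (if e = x then 2 else 1) = n + 1 := by
      have hpt : ∀ e : Fin n, (if e = x then 2 else 1) = 1 + (if e = x then 1 else 0) := by
        intro e
        by_cases h : e = x <;> simp [h]
      rw [Finset.sum_congr rfl (fun e _ => hpt e), Finset.sum_add_distrib,
        Finset.sum_ite_eq' Finset.univ x (fun _ => 1)]
      simp
    omega
  have hOx : ∀ t, Y1.seq t = x → t % (n + 1) = 0 ∨ t % (n + 1) = j₀ := by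
    intro t ht
    have hsub : ({0, j₀} : Finset ℕ) ⊆ (Finset.range (n + 1)).filter (fun s => Y1.seq s = x) := by
      intro s hs
      simp only [Finset.mem_insert, Finset.mem_singleton] at hs
      rcases hs with rfl | rfl
      · exact Finset.mem_filter.mpr ⟨Finset.mem_range.mpr (by omega), rfl⟩
      · exact Finset.mem_filter.mpr ⟨Finset.mem_range.mpr (by omega), hx0⟩
    have heqset : (Finset.range (n + 1)).filter (fun s => Y1.seq s = x) = {0, j₀} := by
      refine (Finset.eq_of_subset_of_card_le hsub ?_).symm
      rw [Finset.card_pair (by omega : (0 : ℕ) ≠ j₀)]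
      have h1 : cnt x = 2 := by rw [hcnt x, if_pos rfl]
      exact le_of_eq h1
    have hmem : t % (n + 1) ∈ (Finset.range (n + 1)).filter (fun s => Y1.seq s = x) := by
      refine Finset.mem_filter.mpr ⟨Finset.mem_range.mpr (Nat.mod_lt _ (by omega)), ?_⟩
      rw [seq_mod]
      exact ht
    rw [heqset] at hmem
    simpa using hmem
  have h1n : Y1.seq 1 ≠ Y1.seq n := by
    intro hdn
    have hd1x : Y1.seq 1 ≠ x := by
      intro h
      rcases hOx 1 h with h' | h'
      · rw [Nat.mod_eq_of_lt (by omega)] at h'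
        omega
      · rw [Nat.mod_eq_of_lt (by omega)] at h'
        omega
    have hsub : ({1, n} : Finset ℕ) ⊆
        (Finset.range (n + 1)).filter (fun t => Y1.seq t = Y1.seq 1) := by
      intro s hs
      simp only [Finset.mem_insert, Finset.mem_singleton] at hs
      rcases hs with rfl | rfl
      · exact Finset.mem_filter.mpr ⟨Finset.mem_range.mpr (by omega), rfl⟩
      · exact Finset.mem_filter.mpr ⟨Finset.mem_range.mpr (by omega), hdn.symm⟩
    have hcard := Finset.card_le_card hsub
    rw [Finset.card_pair (by omega : (1 : ℕ) ≠ n)] at hcard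
    have h1 : cnt (Y1.seq 1) = 1 := by rw [hcnt, if_neg hd1x]
    have h2 : ((Finset.range (n + 1)).filter (fun t => Y1.seq t = Y1.seq 1)).card = 1 := h1
    omega
  -- arithmetic setup
  set q := k / n with hqdef
  set r := k % n with hrdef
  have hqr : n * q + r = k := Nat.div_add_mod k n
  have hr1 : 1 ≤ r := by
    rcases Nat.eq_zero_or_pos r with h | h
    · exact absurd (Nat.dvd_of_mod_eq_zero h) hnd
    · exact h
  have hrn : r < n := Nat.mod_lt _ hn0
  have hrq : r ≤ q := by
    have h1 : (n - 1) * n ≤ k := by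
      have := Nat.sub_mul n 1 n
      have h2 : 1 * n = n := one_mul n
      omega
    have h2 : n - 1 ≤ q := by
      rw [hqdef]
      exact (Nat.le_div_iff_mul_le hn0).mpr h1
    omega
  have hq1 : 1 ≤ q := le_trans hr1 hrq
  have hphik : phi (n + 1) r q k = (n + 1) * q :=
    phi_k hn3 rfl hr1 hrq (by omega)
  have hpadd : ∀ i, phi (n + 1) r q (i + k) = phi (n + 1) r q i + (n + 1) * q :=
    phi_add_k (by omega) (by omega) hphik
  have hnotdel : ∀ i, ¬ delP (n + 1) r q (phi (n + 1) r q i) :=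
    not_delP_phi (by omega) hr1
  -- the reindexed walk
  set f : ℕ → Fin n := fun i => Y1.seq (phi (n + 1) r q i) with hfdef
  have hfper : ∀ i, f (i + k) = f i := by
    intro i
    show Y1.seq (phi (n + 1) r q (i + k)) = Y1.seq (phi (n + 1) r q i)
    rw [hpadd i, mul_comm (n + 1) q]
    exact seq_add_mul Y1 _ q
  have hmodn : ∀ i, phi (n + 1) r q (i + 1) = phi (n + 1) r q i + 2 →
      phi (n + 1) r q i % (n + 1) = n := by
    intro i hskip
    obtain ⟨-, hdel⟩ := phi_skip (by rw [hskip]; omega)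
    have h1 := hdel.1
    have h2 : phi (n + 1) r q i % (n + 1) < n + 1 := Nat.mod_lt _ (by omega)
    by_contra hcon
    have h3 : phi (n + 1) r q i % (n + 1) + 1 < n + 1 := by omega
    rw [mod_succ_lt h3] at h1
    omega
  have hfstep : ∀ i, f i ≠ f (i + 1) := by
    intro i
    show Y1.seq (phi (n + 1) r q i) ≠ Y1.seq (phi (n + 1) r q (i + 1))
    by_cases hcase : phi (n + 1) r q (i + 1) = phi (n + 1) r q i + 1
    · rw [hcase]
      exact Y1.step _
    · obtain ⟨h2, hdel⟩ := phi_skip hcase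
      have hmn := hmodn i h2
      have e1 : Y1.seq (phi (n + 1) r q i) = Y1.seq n :=
        seq_congr Y1 (by rw [hmn, Nat.mod_eq_of_lt (by omega)])
      have e2 : Y1.seq (phi (n + 1) r q i + 2) = Y1.seq 1 := by
        apply seq_congr Y1
        have hd1 := hdel.1
        rw [show phi (n + 1) r q i + 2 = (phi (n + 1) r q i + 1) + 1 by ring]
        rw [mod_succ_lt (by omega : (phi (n + 1) r q i + 1) % (n + 1) + 1 < n + 1), hd1]
        rw [Nat.mod_eq_of_lt (by omega)]
      rw [h2, e1, e2]
      exact fun h => h1n h.symm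
  have hfcov : ∀ d : Fin n, ∃ i, i < k ∧ f i = d := by
    intro d
    by_cases hdx : d = x
    · refine ⟨0, by omega, ?_⟩
      show Y1.seq (phi (n + 1) r q 0) = d
      rw [phi_zero, hdx]
    · obtain ⟨o, ho, hoseq⟩ := exists_occ Y1 d
      have ho0 : o ≠ 0 := by
        intro h
        rw [h] at hoseq
        exact hdx (by rw [← hoseq, hxdef])
      have hnodel : ¬ delP (n + 1) r q o := by
        rintro ⟨h1, -⟩
        rw [Nat.mod_eq_of_lt (by omega)] at h1
        exact ho0 h1
      obtain ⟨i, hi⟩ := phi_surj (by omega) o hnodel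
      refine ⟨i, ?_, ?_⟩
      · have := phi_ge (m := n + 1) (r := r) (q := q) i
        omega
      · show Y1.seq (phi (n + 1) r q i) = d
        rw [hi]
        exact hoseq
  set Z : CWalk n k := ⟨f, hfper, hfstep, fun d => by
    obtain ⟨i, h1, h2⟩ := hfcov d
    exact ⟨i, h1, h2⟩⟩ with hZdef
  refine ⟨Z, ?_⟩
  have hY1R : Y1.R c = Y.R c := rot_R Y (by omega) a
  rw [← hY1R]
  apply R_le Z (by omega)
  intro d
  apply RT_le Z (by omega : 0 < k)
  rintro T ⟨i, j, hij, hi, hj, hbet, rfl⟩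
  have hmono : ∀ {u v : ℕ}, u < v → phi (n + 1) r q u < phi (n + 1) r q v :=
    fun h => phi_strictMono h
  -- travel time comparison
  have hS1 : ∀ jj, i ≤ jj → Z.tt c i jj ≤ Y1.tt c (phi (n + 1) r q i) (phi (n + 1) r q jj) := by
    intro jj hjj
    induction jj, hjj using Nat.le_induction with
    | base => rw [tt_self, tt_self]
    | succ jj hjj ih =>
        have hmle : phi (n + 1) r q i ≤ phi (n + 1) r q jj :=
          phi_strictMono.monotone hjj
        have hb := phi_succ_bounds (m := n + 1) (r := r) (q := q) jj
        have e1 := tt_add Z (c := c) hjj (show jj ≤ jj + 1 by omega)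
        have e2 := tt_add Y1 (c := c) hmle (show phi (n + 1) r q jj ≤ phi (n + 1) r q (jj + 1) by omega)
        have hedge : Z.tt c jj (jj + 1) ≤ Y1.tt c (phi (n + 1) r q jj) (phi (n + 1) r q (jj + 1)) := by
          rw [tt_succ]
          show c (Y1.seq (phi (n + 1) r q jj)) (Y1.seq (phi (n + 1) r q (jj + 1))) ≤ _
          by_cases hcase : phi (n + 1) r q (jj + 1) = phi (n + 1) r q jj + 1
          · rw [hcase, tt_succ]
          · obtain ⟨h2, hdel⟩ := phi_skip hcase
            have e3 : Y1.tt c (phi (n + 1) r q jj) (phi (n + 1) r q jj + 2)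
                = c (Y1.seq (phi (n + 1) r q jj)) (Y1.seq (phi (n + 1) r q jj + 1))
                  + c (Y1.seq (phi (n + 1) r q jj + 1)) (Y1.seq (phi (n + 1) r q jj + 2)) := by
              rw [← tt_add Y1 (show phi (n + 1) r q jj ≤ phi (n + 1) r q jj + 1 by omega)
                (show phi (n + 1) r q jj + 1 ≤ phi (n + 1) r q jj + 2 by omega), tt_succ]
              have : phi (n + 1) r q jj + 1 + 1 = phi (n + 1) r q jj + 2 := by ring
              rw [← this, tt_succ]
            rw [h2, e3]
            have := htri (Y1.seq (phi (n + 1) r q jj)) (Y1.seq (phi (n + 1) r q jj + 1))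
              (Y1.seq (phi (n + 1) r q jj + 2))
            rw [show phi (n + 1) r q jj + 2 = phi (n + 1) r q jj + 1 + 1 by ring] at this ⊢
            exact this
        rw [← e1, ← e2]
        exact add_le_add ih hedge
  have hS1' := hS1 j (le_of_lt hij)
  have hbet' : ∀ t, phi (n + 1) r q i < t → t < phi (n + 1) r q j → Y1.seq t = d →
      delP (n + 1) r q t := by
    intro t h1 h2 hseq
    by_contra hnd'
    obtain ⟨i'', hi''⟩ := phi_surj (by omega) t hnd'
    rw [← hi''] at h1 h2
    have hii1 : i < i'' := phi_strictMono.lt_iff_lt.mp h1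
    have hii2 : i'' < j := phi_strictMono.lt_iff_lt.mp h2
    exact hbet i'' hii1 hii2 (by show Y1.seq (phi (n + 1) r q i'') = d; rw [hi'']; exact hseq)
  by_cases hcons : ∀ t, phi (n + 1) r q i < t → t < phi (n + 1) r q j → Y1.seq t ≠ d
  · have hmem : Y1.tt c (phi (n + 1) r q i) (phi (n + 1) r q j) ∈ RTset c Y1 d :=
      ⟨phi (n + 1) r q i, phi (n + 1) r q j, hmono hij, hi, hj, hcons, rfl⟩
    exact le_trans hS1' (le_trans (le_RT hc Y1 (by omega) hmem) (RT_le_R hc Y1 (by omega) d))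
  · push_neg at hcons
    obtain ⟨t₀, ht1, ht2, ht3⟩ := hcons
    have hdel₀ := hbet' t₀ ht1 ht2 ht3
    have ht0m : t₀ % (n + 1) = 0 := hdel₀.1
    have hdx : d = x := by
      rw [← ht3, hxdef]
      exact seq_congr Y1 (by rw [ht0m]; simp)
    have hAocc : Y1.seq (phi (n + 1) r q i) = x := by rw [← hdx]; exact hi
    have hBocc : Y1.seq (phi (n + 1) r q j) = x := by rw [← hdx]; exact hj
    have hAB : phi (n + 1) r q i < phi (n + 1) r q j := hmono hij
    have hno : ∀ s, phi (n + 1) r q i < s → s < phi (n + 1) r q j → Y1.seq s = x →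
        delP (n + 1) r q s := fun s h1 h2 h3 => hbet' s h1 h2 (by rw [hdx]; exact h3)
    have hAj : phi (n + 1) r q i % (n + 1) = j₀ := by
      rcases hOx _ hAocc with h0 | hj'
      · exfalso
        have hsocc : Y1.seq (phi (n + 1) r q i + j₀) = x := by
          have hmm : (phi (n + 1) r q i + j₀) % (n + 1) = j₀ % (n + 1) := by
            rw [Nat.add_mod, h0, zero_add, Nat.mod_mod_of_dvd _ dvd_rfl]
          rw [seq_congr Y1 hmm]
          exact hx0
        have hst0 : phi (n + 1) r q i + (n + 1) ≤ t₀ := by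
          have hdvd : (n + 1) ∣ t₀ - phi (n + 1) r q i := by
            have hmm : phi (n + 1) r q i % (n + 1) = t₀ % (n + 1) := by rw [h0, ht0m]
            exact (Nat.modEq_iff_dvd' (le_of_lt ht1)).mp hmm
          obtain ⟨u, hu⟩ := hdvd
          have : (n + 1) ≤ (n + 1) * u ∨ (n + 1) * u = 0 := by
            rcases Nat.eq_zero_or_pos u with h | h
            · right; simp [h]
            · exact Or.inl (Nat.le_mul_of_pos_right _ h)
          omega
        have hdel' := hno (phi (n + 1) r q i + j₀) (by omega) (by omega) hsocc
        have hz := hdel'.1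
        rw [Nat.add_mod, h0, zero_add, Nat.mod_mod_of_dvd _ dvd_rfl,
          Nat.mod_eq_of_lt (by omega : j₀ < n + 1)] at hz
        omega
      · exact hj'
    have hBA : phi (n + 1) r q j ≤ phi (n + 1) r q i + (n + 1) := by
      by_contra hcon'
      push_neg at hcon'
      have hsocc : Y1.seq (phi (n + 1) r q i + (n + 1)) = x :=
        (Y1.periodic _).trans hAocc
      have hdel' := hno _ (by omega) (by omega) hsocc
      have hz := hdel'.1
      rw [Nat.add_mod_right, hAj] at hz
      omega
    have hBeq : phi (n + 1) r q j = phi (n + 1) r q i + (n + 1) := by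
      rcases hOx _ hBocc with h0 | hjB
      · exfalso
        have hdvd : (n + 1) ∣ phi (n + 1) r q j - t₀ := by
          have hmm : t₀ % (n + 1) = phi (n + 1) r q j % (n + 1) := by rw [ht0m, h0]
          exact (Nat.modEq_iff_dvd' (le_of_lt ht2)).mp hmm
        obtain ⟨u, hu⟩ := hdvd
        have : (n + 1) ≤ (n + 1) * u ∨ (n + 1) * u = 0 := by
          rcases Nat.eq_zero_or_pos u with h | h
          · right; simp [h]
          · exact Or.inl (Nat.le_mul_of_pos_right _ h)
        omega
      · have hdvd : (n + 1) ∣ phi (n + 1) r q j - phi (n + 1) r q i := by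
          have hmm : phi (n + 1) r q i % (n + 1) = phi (n + 1) r q j % (n + 1) := by
            rw [hAj, hjB]
          exact (Nat.modEq_iff_dvd' (le_of_lt hAB)).mp hmm
        obtain ⟨u, hu⟩ := hdvd
        have : (n + 1) ≤ (n + 1) * u ∨ (n + 1) * u = 0 := by
          rcases Nat.eq_zero_or_pos u with h | h
          · right; simp [h]
          · exact Or.inl (Nat.le_mul_of_pos_right _ h)
        omega
    calc Z.tt c i j ≤ Y1.tt c (phi (n + 1) r q i) (phi (n + 1) r q j) := hS1'
      _ = Y1.duration c := by rw [hBeq]; exact tt_window Y1 _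
      _ ≤ Y1.R c := duration_le_R_succ hc (by omega) Y1


end Aux

/-- for `k ≥ n² - n` the optimal revisit time is bi-modal:
`R*(k) = R*(n) = TSP*` if `n ∣ k`, and `R*(k) = R*(n+1)` otherwise. -/
theorem Rstar_bimodal
    (n k : ℕ) (hn : 2 ≤ n) (hk : n ^ 2 - n ≤ k)
    (c : Fin n → Fin n → ℝ)
    (hc : ∀ u v : Fin n, u ≠ v → 0 < c u v)
    (htri : ∀ u v w : Fin n, c u w ≤ c u v + c v w) :
    (n ∣ k → Rstar n c k = Rstar n c n ∧ Rstar n c n = TSPstar n c) ∧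
    (¬ n ∣ k → Rstar n c k = Rstar n c (n + 1)) := by
  have hnn : n ^ 2 = n * n := by ring
  have hkn : n ≤ k := by
    have h1 : 2 * n ≤ n * n := Nat.mul_le_mul_right n hn
    omega
  constructor
  · intro hdvd
    have hts : Rstar n c n = TSPstar n c := Rstar_n_eq_TSPstar hc (by omega)
    refine ⟨?_, hts⟩
    have hle : Rstar n c k ≤ Rstar n c n := by
      have hne : {T : ℝ | ∃ W : CWalk n n, T = W.R c}.Nonempty := ⟨_, idWalk n hn, rfl⟩
      refine le_csInf hne ?_
      rintro T ⟨W, rfl⟩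
      have h := Rstar_le_R hc (by omega : 0 < n) (liftWalk W k hdvd hkn)
      rwa [liftWalk_R] at h
    have hge : TSPstar n c ≤ Rstar n c k := by
      apply le_Rstar (by omega : 0 < n) (liftWalk (idWalk n hn) k hdvd hkn)
      intro W
      exact TSP_le_R hc htri hn W
    linarith
  · intro hnd
    rcases Nat.lt_or_ge n 3 with h3 | h3
    · have hn2 : n = 2 := by omega
      subst hn2
      have hkodd : k % 2 = 1 := by
        rcases Nat.mod_two_eq_zero_or_one k with h | h
        · exact absurd (Nat.dvd_of_mod_eq_zero h) hnd
        · exact h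
      have he1 : {T : ℝ | ∃ W : CWalk 2 k, T = W.R c} = ∅ := by
        ext T
        simp only [Set.mem_setOf_eq, Set.mem_empty_iff_false, iff_false, not_exists]
        intro W _
        exact no_cwalk_two_odd hkodd W
      have he2 : {T : ℝ | ∃ W : CWalk 2 (2 + 1), T = W.R c} = ∅ := by
        ext T
        simp only [Set.mem_setOf_eq, Set.mem_empty_iff_false, iff_false, not_exists]
        intro W _
        exact no_cwalk_two_odd (by norm_num) W
      unfold Rstar
      rw [he1, he2]
    · have hle : Rstar n c k ≤ Rstar n c (n + 1) := by
        have hne : {T : ℝ | ∃ W : CWalk n (n + 1), T = W.R c}.Nonempty :=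
          ⟨_, succWalk n h3, rfl⟩
        refine le_csInf hne ?_
        rintro T ⟨Y, rfl⟩
        obtain ⟨Z, hZ⟩ := exists_Z hc htri h3 hk hnd Y
        exact le_trans (Rstar_le_R hc (by omega : 0 < n) Z) hZ
      have hge : Rstar n c (n + 1) ≤ Rstar n c k := by
        obtain ⟨Z₀, -⟩ := exists_Z hc htri h3 hk hnd (succWalk n h3)
        apply le_Rstar (by omega : 0 < n) Z₀
        intro W
        exact Rsucc_le_R hc htri h3 hnd W
      linarith
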